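/- arXiv:1401.4689 — 5 statements merged into one kernel-verified Lean document; each statement's English description precedes it below -/
import Mathlib

section
/- Let S be a finite alphabet with a complementation and let V ⊆ S^d be a finite polybox code without twin pairs. For v ∈ V let d(v) be the number of words u ∈ V such that u and v are i-siblings for some i ∈ {1,…,d}. Suppose u, v ∈ V are i-siblings for some i, and set n = d(u), m = d(v). If n + m = 2d, then there are i ∈ {1,…,d} and l ∈ S with |V^{i,l} ∪ V^{i,l'}| ≥ 2d − 2; and if n + m ≤ 2d − 1, then there are i ∈ {1,…,d} and l ∈ S with |V^{i,l} ∪ V^{i,l'}| ≥ n + m − 1. -/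
variable {S : Type}

/-- Two words are dichotomous: at some position they carry complementary letters. -/
def Dicho {d : ℕ} (c : S → S) (u v : Fin d → S) : Prop := ∃ j, v j = c (u j)

/-- Two words form a twin pair. -/
def TwinPair {d : ℕ} (c : S → S) (u v : Fin d → S) : Prop :=
  ∃ j, v j = c (u j) ∧ ∀ i, i ≠ j → v i = u i

/-- A polybox code: a set of pairwise dichotomous words. -/
def PolyboxCode {d : ℕ} (c : S → S) (V : Set (Fin d → S)) : Prop :=
  ∀ u ∈ V, ∀ v ∈ V, u ≠ v → Dicho c u v

/-- The code contains no twin pair. -/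
def NoTwinPair {d : ℕ} (c : S → S) (V : Set (Fin d → S)) : Prop :=
  ∀ u ∈ V, ∀ v ∈ V, ¬ TwinPair c u v

/-- `ES`: sets containing exactly one of `s`, `s'` for every letter `s`. -/
def ESet (c : S → S) : Set (Set S) := {B | ∀ s, Xor' (s ∈ B) (c s ∈ B)}

/-- `Es`: members of `ES` containing the letter `s`. -/
def ELetter (c : S → S) (s : S) : Set (Set S) := {B | B ∈ ESet c ∧ s ∈ B}

/-- The equicomplementary realization `v̌ ⊆ (ES)^d` of a word `v`. -/
def Realize {d : ℕ} (c : S → S) (v : Fin d → S) : Set (Fin d → Set S) :=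
  {x | ∀ i, x i ∈ ELetter c (v i)}

/-- The union `⋃_{v ∈ V} v̌`. -/
def RealizeSet {d : ℕ} (c : S → S) (V : Set (Fin d → S)) : Set (Fin d → Set S) :=
  ⋃ v ∈ V, Realize c v

/-- Two codes are equivalent if their realizations coincide. -/
def EquivCodes {d : ℕ} (c : S → S) (V W : Set (Fin d → S)) : Prop :=
  RealizeSet c V = RealizeSet c W

/-- A partition code: a polybox code whose realization is the whole box `(ES)^d`. -/
def PartitionCode {d : ℕ} (c : S → S) (U : Set (Fin d → S)) : Prop :=
  PolyboxCode c U ∧ RealizeSet c U = {x | ∀ i, x i ∈ ESet c}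

/-- `V^{i,l}`: the words of `V` with letter `l` at position `i`. -/
def Subcode {d : ℕ} (V : Set (Fin d → S)) (i : Fin d) (l : S) : Set (Fin d → S) :=
  {v | v ∈ V ∧ v i = l}

/-- `u` and `v` are `i`-siblings: `v i ∉ {u i, (u i)'}` and the words obtained by
deleting the `i`-th coordinate form a twin pair. -/
def Siblings {d : ℕ} (c : S → S) (i : Fin d) (u v : Fin d → S) : Prop :=
  v i ≠ u i ∧ v i ≠ c (u i) ∧
    ∃ j, j ≠ i ∧ v j = c (u j) ∧ ∀ k, k ≠ i → k ≠ j → v k = u k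

/-- The degree of `v` in the graph of siblings on `V`. -/
noncomputable def sibDeg {d : ℕ} (c : S → S) (V : Set (Fin d → S))
    (v : Fin d → S) : ℕ :=
  {u ∈ V | ∃ i, Siblings c i v u}.ncard


section SibAux

variable {c : S → S}

private lemma sib_symm' {d : ℕ} (hinv : Function.Involutive c) {i : Fin d}
    {u v : Fin d → S} (h : Siblings c i u v) : Siblings c i v u := by
  obtain ⟨h1, h2, j, hji, hj, hoff⟩ := h
  refine ⟨fun e => h1 e.symm, fun e => h2 ?_, j, hji, ?_, fun k hk hkj => (hoff k hk hkj).symm⟩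
  · rw [e, hinv]
  · rw [hj, hinv]

private lemma sib_dir_unique {d : ℕ} {x w : Fin d → S} {p q : Fin d}
    (hp : Siblings c p x w) (hq : Siblings c q x w) : p = q := by
  by_contra hne
  obtain ⟨h1, h2, m, hm, hwm, hoff⟩ := hp
  obtain ⟨g1, g2, m', hm', hwm', hoff'⟩ := hq
  by_cases hqm : q = m
  · exact g2 (hqm ▸ hwm)
  · exact g1 (hoff q (fun e => hne e.symm) hqm)

private lemma sib_good {d : ℕ} {p k : Fin d} {x w : Fin d → S}
    (h : Siblings c k x w) (hpk : p ≠ k) : w p = x p ∨ w p = c (x p) := by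
  obtain ⟨_, _, m, hmk, hm, hoff⟩ := h
  by_cases hpm : p = m
  · right; rw [hpm]; exact hm
  · left; exact hoff p hpk hpm

private lemma sib_disj {d : ℕ} (hinv : Function.Involutive c) (hfix : ∀ s, c s ≠ s)
    {i : Fin d} {u v w : Fin d → S} (huv : Siblings c i u v)
    (h1 : ∃ k, Siblings c k u w) (h2 : ∃ k, Siblings c k v w) : False := by
  obtain ⟨hvi1, hvi2, j, hji, hvj, hvoff⟩ := huv
  obtain ⟨k, hk1, hk2, m, hmk, hwm, hou⟩ := h1
  obtain ⟨k', g1, g2, m', hm'k', hwm', hov⟩ := h2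
  have hvne : ∀ p, v p ≠ u p → v p ≠ c (u p) → p = i := by
    intro p hp1 hp2
    by_contra hpi
    by_cases hpj : p = j
    · exact hp2 (hpj ▸ hvj)
    · exact hp1 (hvoff p hpi hpj)
  have hk_i : k ≠ k' → k = i := by
    intro h
    by_cases hkm' : k = m'
    · have hw : w k = c (v k) := by rw [hkm']; exact hwm'
      apply hvne k
      · intro e; exact hk2 (hw.trans (by rw [e]))
      · intro e; exact hk1 (by rw [hw, e, hinv])
    · have hw : w k = v k := hov k h hkm'
      apply hvne k
      · intro e; exact hk1 (hw.trans e)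
      · intro e; exact hk2 (hw.trans e)
  have hk'_i : k' ≠ k → k' = i := by
    intro h
    by_cases hk'm : k' = m
    · have hw : w k' = c (u k') := by rw [hk'm]; exact hwm
      apply hvne k'
      · intro e; exact g2 (hw.trans (by rw [e]))
      · intro e; exact g1 (hw.trans e.symm)
    · have hw : w k' = u k' := hou k' h hk'm
      apply hvne k'
      · intro e; exact g1 (hw.trans e.symm)
      · intro e; exact g2 (hw.trans (by rw [e, hinv]))
  have hkk' : k = k' := by
    by_contra h
    exact h ((hk_i h).trans (hk'_i (Ne.symm h)).symm)
  subst hkk'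
  by_cases hmm : m = m'
  · subst hmm
    have hum : u m = v m := hinv.injective (hwm.symm.trans hwm')
    have hvq : ∀ p, p ≠ k → v p = u p := by
      intro p hpk
      by_cases hpm : p = m
      · rw [hpm]; exact hum.symm
      · rw [← hov p hpk hpm, hou p hpk hpm]
    have hik : i = k := by
      by_contra h
      exact hvi1 (hvq i h)
    have hvju : v j = u j := hvq j (by rw [← hik]; exact hji)
    exact hfix (u j) (hvj.symm.trans hvju)
  · have h5 : v m = c (u m) := (hov m hmk hmm).symm.trans hwm
    have hmj : m = j := by
      by_cases hmi : m = i
      · exact absurd (hmi ▸ h5) hvi2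
      · by_contra hmjn
        exact hfix (u m) (h5.symm.trans (hvoff m hmi hmjn))
    have hwu : w m' = u m' := hou m' hm'k' (fun e => hmm e.symm)
    have h7 : u m' = c (v m') := hwu.symm.trans hwm'
    have h6 : v m' = c (u m') := by rw [h7, hinv]
    have hm'j : m' = j := by
      by_cases hm'i : m' = i
      · exact absurd (hm'i ▸ h6) hvi2
      · by_contra hm'jn
        exact hfix (u m') (h6.symm.trans (hvoff m' hm'i hm'jn))
    exact hmm (hmj.trans hm'j.symm)

end SibAux

theorem siblings_degree_distribution {d : ℕ} [Fintype S] (c : S → S)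
    (hinv : Function.Involutive c) (hfix : ∀ s, c s ≠ s)
    (V : Set (Fin d → S)) (hVfin : V.Finite)
    (hV : PolyboxCode c V) (hVt : NoTwinPair c V)
    (u v : Fin d → S) (hu : u ∈ V) (hv : v ∈ V)
    (hsib : ∃ i, Siblings c i u v) :
    ((sibDeg c V u + sibDeg c V v = 2 * d →
        ∃ (i : Fin d) (l : S),
          2 * d - 2 ≤ (Subcode V i l ∪ Subcode V i (c l)).ncard) ∧
      (sibDeg c V u + sibDeg c V v ≤ 2 * d - 1 →
        ∃ (i : Fin d) (l : S),
          sibDeg c V u + sibDeg c V v - 1 ≤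
            (Subcode V i l ∪ Subcode V i (c l)).ncard)) := by
  classical
  obtain ⟨i, hi⟩ := hsib
  obtain ⟨hvi1, hvi2, j, hji, hvj, hvoff⟩ := hi
  have hi' : Siblings c i u v := ⟨hvi1, hvi2, j, hji, hvj, hvoff⟩
  have hd2 : 1 < d := by
    haveI : Nontrivial (Fin d) := ⟨j, i, hji⟩
    simpa using Fintype.one_lt_card (α := Fin d)
  set VF : Finset (Fin d → S) := hVfin.toFinset with hVF
  set NFu : Finset (Fin d → S) := VF.filter (fun w => ∃ p, Siblings c p u w) with hNFu
  set NFv : Finset (Fin d → S) := VF.filter (fun w => ∃ p, Siblings c p v w) with hNFv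
  set SFu : Fin d → Finset (Fin d → S) := fun p => VF.filter (fun w => Siblings c p u w) with hSFu
  set SFv : Fin d → Finset (Fin d → S) := fun p => VF.filter (fun w => Siblings c p v w) with hSFv
  have hmemVF : ∀ w : Fin d → S, w ∈ VF ↔ w ∈ V := fun w => hVfin.mem_toFinset
  have hn : sibDeg c V u = NFu.card := by
    have hset : {x ∈ V | ∃ p, Siblings c p u x} = ↑NFu := by
      ext w
      simp only [hNFu, Finset.coe_filter, Set.mem_setOf_eq, hmemVF]
    rw [sibDeg, hset, Set.ncard_coe_finset]
  have hm : sibDeg c V v = NFv.card := by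
    have hset : {x ∈ V | ∃ p, Siblings c p v x} = ↑NFv := by
      ext w
      simp only [hNFv, Finset.coe_filter, Set.mem_setOf_eq, hmemVF]
    rw [sibDeg, hset, Set.ncard_coe_finset]
  have hcard_u : NFu.card = ∑ p, (SFu p).card := by
    have heq : NFu = Finset.univ.biUnion (fun p => SFu p) := by
      ext w
      simp only [hNFu, hSFu, Finset.mem_biUnion, Finset.mem_filter, Finset.mem_univ, true_and]
      tauto
    rw [heq]
    refine Finset.card_biUnion ?_
    intro p _ q _ hpq
    rw [Function.onFun, Finset.disjoint_left]
    intro w hwp hwq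
    simp only [hSFu, Finset.mem_filter] at hwp hwq
    exact hpq (sib_dir_unique hwp.2 hwq.2)
  have hcard_v : NFv.card = ∑ p, (SFv p).card := by
    have heq : NFv = Finset.univ.biUnion (fun p => SFv p) := by
      ext w
      simp only [hNFv, hSFv, Finset.mem_biUnion, Finset.mem_filter, Finset.mem_univ, true_and]
      tauto
    rw [heq]
    refine Finset.card_biUnion ?_
    intro p _ q _ hpq
    rw [Function.onFun, Finset.disjoint_left]
    intro w hwp hwq
    simp only [hSFv, Finset.mem_filter] at hwp hwq
    exact hpq (sib_dir_unique hwp.2 hwq.2)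
  have h1u : 1 ≤ (SFu i).card := by
    refine Finset.card_pos.2 ⟨v, ?_⟩
    simp only [hSFu, Finset.mem_filter]
    exact ⟨(hmemVF v).2 hv, hi'⟩
  have h1v : 1 ≤ (SFv i).card := by
    refine Finset.card_pos.2 ⟨u, ?_⟩
    simp only [hSFv, Finset.mem_filter]
    exact ⟨(hmemVF u).2 hu, sib_symm' hinv hi'⟩
  have hdisjN : Disjoint NFu NFv := by
    rw [Finset.disjoint_left]
    intro w hwu hwv
    simp only [hNFu, hNFv, Finset.mem_filter] at hwu hwv
    exact sib_disj hinv hfix hi' hwu.2 hwv.2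
  have hSsubU : ∀ p, SFu p ⊆ NFu := by
    intro p w hw
    simp only [hSFu, Finset.mem_filter] at hw
    simp only [hNFu, Finset.mem_filter]
    exact ⟨hw.1, p, hw.2⟩
  have hSsubV : ∀ p, SFv p ⊆ NFv := by
    intro p w hw
    simp only [hSFv, Finset.mem_filter] at hw
    simp only [hNFv, Finset.mem_filter]
    exact ⟨hw.1, p, hw.2⟩
  -- the key cardinality bound for each coordinate p ≠ i
  have final : ∀ p : Fin d, p ≠ i →
      sibDeg c V u + sibDeg c V v - ((SFu p).card + (SFv p).card) ≤
        (Subcode V p (u p) ∪ Subcode V p (c (u p))).ncard := by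
    intro p hpi
    set G : Finset (Fin d → S) := (NFu \ SFu p) ∪ (NFv \ SFv p) with hG
    have hGsub : ↑G ⊆ Subcode V p (u p) ∪ Subcode V p (c (u p)) := by
      intro w hw
      simp only [hG, Finset.coe_union, Set.mem_union, Finset.mem_coe, Finset.mem_sdiff] at hw
      rcases hw with ⟨hwu, hwnp⟩ | ⟨hwv, hwnp⟩
      · simp only [hNFu, Finset.mem_filter] at hwu
        simp only [hSFu, Finset.mem_filter] at hwnp
        obtain ⟨hwVF, k, hk⟩ := hwu
        have hkp : p ≠ k := fun e => hwnp ⟨hwVF, e ▸ hk⟩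
        have hwV : w ∈ V := (hmemVF w).1 hwVF
        rcases sib_good hk hkp with h | h
        · exact Or.inl ⟨hwV, h⟩
        · exact Or.inr ⟨hwV, h⟩
      · simp only [hNFv, Finset.mem_filter] at hwv
        simp only [hSFv, Finset.mem_filter] at hwnp
        obtain ⟨hwVF, k, hk⟩ := hwv
        have hkp : p ≠ k := fun e => hwnp ⟨hwVF, e ▸ hk⟩
        have hwV : w ∈ V := (hmemVF w).1 hwVF
        have hvp : v p = u p ∨ v p = c (u p) := by
          by_cases hpj : p = j
          · right; rw [hpj]; exact hvj
          · left; exact hvoff p hpi hpj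
        rcases sib_good hk hkp with h | h <;> rcases hvp with h2 | h2
        · exact Or.inl ⟨hwV, h.trans h2⟩
        · exact Or.inr ⟨hwV, h.trans h2⟩
        · exact Or.inr ⟨hwV, by rw [h, h2]⟩
        · exact Or.inl ⟨hwV, by rw [h, h2, hinv]⟩
    have hfinT : (Subcode V p (u p) ∪ Subcode V p (c (u p))).Finite := by
      refine hVfin.subset ?_
      rintro x (hx | hx) <;> exact hx.1
    have hle : G.card ≤ (Subcode V p (u p) ∪ Subcode V p (c (u p))).ncard := by
      have h := Set.ncard_le_ncard hGsub hfinT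
      rwa [Set.ncard_coe_finset] at h
    have hdisjG : Disjoint (NFu \ SFu p) (NFv \ SFv p) :=
      hdisjN.mono (Finset.sdiff_subset) (Finset.sdiff_subset)
    have hGcard : G.card = (NFu.card - (SFu p).card) + (NFv.card - (SFv p).card) := by
      rw [hG, Finset.card_union_of_disjoint hdisjG, Finset.card_sdiff_of_subset (hSsubU p),
        Finset.card_sdiff_of_subset (hSsubV p)]
    have hle2 : (SFu p).card ≤ NFu.card := Finset.card_le_card (hSsubU p)
    have hle3 : (SFv p).card ≤ NFv.card := Finset.card_le_card (hSsubV p)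
    rw [hn, hm]
    omega
  have hsum_u : (SFu i).card + ∑ p ∈ Finset.univ.erase i, (SFu p).card = NFu.card := by
    rw [hcard_u]
    exact Finset.add_sum_erase Finset.univ (fun p => (SFu p).card) (Finset.mem_univ i)
  have hsum_v : (SFv i).card + ∑ p ∈ Finset.univ.erase i, (SFv p).card = NFv.card := by
    rw [hcard_v]
    exact Finset.add_sum_erase Finset.univ (fun p => (SFv p).card) (Finset.mem_univ i)
  have hsum_bound : ∑ p ∈ Finset.univ.erase i, ((SFu p).card + (SFv p).card) + 2 ≤
      sibDeg c V u + sibDeg c V v := by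
    rw [hn, hm, Finset.sum_add_distrib]
    omega
  have hcard_erase : (Finset.univ.erase i).card = d - 1 := by
    rw [Finset.card_erase_of_mem (Finset.mem_univ i), Finset.card_univ, Fintype.card_fin]
  constructor
  · intro h2d
    have hex : ∃ p ∈ Finset.univ.erase i, (SFu p).card + (SFv p).card ≤ 2 := by
      by_contra hcon
      push_neg at hcon
      have h3 : (Finset.univ.erase i).card * 3 ≤
          ∑ p ∈ Finset.univ.erase i, ((SFu p).card + (SFv p).card) := by
        have := Finset.card_nsmul_le_sum (Finset.univ.erase i)
          (fun p => (SFu p).card + (SFv p).card) 3 (fun p hp => hcon p hp)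
        simpa [smul_eq_mul] using this
      omega
    obtain ⟨p, hp, hple⟩ := hex
    have hpi : p ≠ i := Finset.ne_of_mem_erase hp
    refine ⟨p, u p, ?_⟩
    have := final p hpi
    omega
  · intro h2d
    have hex : ∃ p ∈ Finset.univ.erase i, (SFu p).card + (SFv p).card ≤ 1 := by
      by_contra hcon
      push_neg at hcon
      have h3 : (Finset.univ.erase i).card * 2 ≤
          ∑ p ∈ Finset.univ.erase i, ((SFu p).card + (SFv p).card) := by
        have := Finset.card_nsmul_le_sum (Finset.univ.erase i)
          (fun p => (SFu p).card + (SFv p).card) 2 (fun p hp => hcon p hp)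
        simpa [smul_eq_mul] using this
      omega
    obtain ⟨p, hp, hple⟩ := hex
    have hpi : p ≠ i := Finset.ne_of_mem_erase hp
    refine ⟨p, u p, ?_⟩
    have := final p hpi
    omega
end

section
/- Let G be a finite simple graph with at least one edge, and let m = max{d(v) + d(u) : v and u are adjacent vertices of G}, where d(v) denotes the degree of v. Then the average degree of G satisfies d(G) = (Σ_v d(v))/|V(G)| ≤ m/2. -/
open Finset

theorem average_degree_le_max_adjacent_sum_div_two
    {V : Type} [Fintype V] (G : SimpleGraph V) [DecidableRel G.Adj]
    (hedge : ∃ u v, G.Adj u v) (m : ℕ)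
    (hm : IsGreatest {k | ∃ u v, G.Adj u v ∧ G.degree u + G.degree v = k} m) :
    ((∑ v : V, G.degree v : ℚ)) / (Fintype.card V : ℚ) ≤ (m : ℚ) / 2 := by
  classical
  -- fiberwise sum over darts
  have hfib : ∀ f : V → ℕ, ∑ d : G.Dart, f d.fst = ∑ v, G.degree v * f v := by
    intro f
    rw [← Finset.sum_fiberwise univ (fun d : G.Dart => d.fst) (fun d => f d.fst)]
    refine Finset.sum_congr rfl fun v _ => ?_
    rw [Finset.sum_congr rfl (fun d hd => by
      simp only [Finset.mem_filter] at hd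
      rw [hd.2]), Finset.sum_const, smul_eq_mul]
    congr 1
    exact G.dart_fst_fiber_card_eq_degree v
  have hsymm : ∑ d : G.Dart, G.degree d.snd = ∑ d : G.Dart, G.degree d.fst := by
    exact Fintype.sum_equiv ((SimpleGraph.Dart.symm_involutive (G := G)).toPerm) _ _
      (fun d => rfl)
  have hkey : 2 * ∑ v, G.degree v * G.degree v ≤ m * ∑ v, G.degree v := by
    have h1 : ∑ d : G.Dart, (G.degree d.fst + G.degree d.snd) ≤
        ∑ _d : G.Dart, m := by
      refine Finset.sum_le_sum fun d _ => ?_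
      exact hm.2 ⟨d.fst, d.snd, d.adj, rfl⟩
    rw [Finset.sum_add_distrib, hsymm, hfib (fun v => G.degree v), Finset.sum_const, smul_eq_mul,
      Finset.card_univ, G.dart_card_eq_sum_degrees] at h1
    rw [mul_comm m (∑ v, G.degree v)]
    omega
  -- Chebyshev in ℚ
  set S : ℚ := ∑ v : V, (G.degree v : ℚ) with hS
  have hcheb : S ^ 2 ≤ (Fintype.card V : ℚ) * ∑ v : V, (G.degree v : ℚ) ^ 2 :=
    by simpa [Finset.card_univ] using
      sq_sum_le_card_mul_sum_sq (s := (univ : Finset V)) (f := fun v => (G.degree v : ℚ))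
  have hkeyQ : 2 * ∑ v : V, (G.degree v : ℚ) ^ 2 ≤ (m : ℚ) * S := by
    have := hkey
    have : ((2 * ∑ v, G.degree v * G.degree v : ℕ) : ℚ) ≤ ((m * ∑ v, G.degree v : ℕ) : ℚ) := by
      exact_mod_cast this
    push_cast at this
    calc 2 * ∑ v : V, (G.degree v : ℚ) ^ 2
        = 2 * ∑ v : V, (G.degree v : ℚ) * (G.degree v : ℚ) := by
          congr 1; exact Finset.sum_congr rfl fun v _ => pow_two _
      _ ≤ (m : ℚ) * S := by rw [hS]; exact_mod_cast this
  have hSpos : 0 < S := by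
    obtain ⟨u, v, huv⟩ := hedge
    have hdu : 0 < G.degree u := by
      rw [SimpleGraph.degree_pos_iff_exists_adj]; exact ⟨v, huv⟩
    have : (0 : ℚ) < ∑ v : V, (G.degree v : ℚ) := by
      refine Finset.sum_pos' (fun i _ => by positivity) ⟨u, Finset.mem_univ u, by exact_mod_cast hdu⟩
    simpa [hS] using this
  have hnpos : (0 : ℚ) < (Fintype.card V : ℚ) := by
    have : 0 < Fintype.card V := Fintype.card_pos_iff.mpr ⟨Classical.choice ⟨(hedge.choose)⟩⟩
    exact_mod_cast this
  rw [div_le_div_iff₀ hnpos (by norm_num)]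
  -- S * 2 ≤ m * card
  nlinarith [hcheb, hkeyQ, hSpos, hnpos]
end

section
/- Let S be a finite alphabet with a complementation, let V ⊆ S^d be a polybox code which does not contain a twin pair, and let w ∈ S^d with w ∉ V be covered by V (that is, w̌ ⊆ ⋃_{v∈V} v̌). Then |V| ≥ 5; moreover, if |V| = 5, then V is rigid, i.e. every polybox code W ⊆ S^d equivalent to V equals V. -/
variable {S : Type}

open Finset

namespace PolyboxAux

set_option linter.unusedSectionVars false
set_option maxHeartbeats 1000000

/-- Boolean model of a member of `ESet c`. -/
def Flip (c : S → S) (g : S → Bool) : Prop := ∀ s, g (c s) = !g s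

/-- A consistent finite set of letters (no two complementary). -/
def Con (c : S → S) (T : Finset S) : Prop := ∀ t ∈ T, c t ∉ T

noncomputable section
open Classical

variable [Fintype S]

/-- A default polarity choice. -/
noncomputable def pol (c : S → S) (s : S) : Bool :=
  decide ((Fintype.equivFin S s : ℕ) < (Fintype.equivFin S (c s) : ℕ))

theorem pol_compl (c : S → S) (hinv : Function.Involutive c) (hfix : ∀ s, c s ≠ s) (s : S) :
    pol c (c s) = !pol c s := by
  unfold pol
  rw [hinv s]
  have hne : (Fintype.equivFin S s : ℕ) ≠ (Fintype.equivFin S (c s) : ℕ) := by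
    intro h
    exact hfix s (((Fintype.equivFin S).injective (Fin.val_injective h))).symm
  rcases Nat.lt_or_ge (Fintype.equivFin S s : ℕ) (Fintype.equivFin S (c s) : ℕ) with h | h
  · simp [h, not_lt.2 (Nat.le_of_lt h)]
  · have h2 : (Fintype.equivFin S (c s) : ℕ) < (Fintype.equivFin S s : ℕ) :=
      lt_of_le_of_ne h hne.symm
    simp [h2, not_lt.2 (Nat.le_of_lt h2)]

/-- Canonical flip function containing a consistent set `T`. -/
noncomputable def mkFlip (c : S → S) (T : Finset S) (s : S) : Bool :=
  if s ∈ T then true else if c s ∈ T then false else pol c s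

theorem mkFlip_flip (c : S → S) (hinv : Function.Involutive c) (hfix : ∀ s, c s ≠ s)
    {T : Finset S} (hT : Con c T) : Flip c (mkFlip c T) := by
  intro s
  unfold mkFlip
  rw [hinv s]
  by_cases h1 : s ∈ T
  · have h2 : c s ∉ T := hT s h1
    simp [h1, h2]
  · by_cases h2 : c s ∈ T
    · simp [h1, h2]
    · simp [h1, h2, pol_compl c hinv hfix]

theorem mkFlip_true (c : S → S) {T : Finset S} {t : S} (ht : t ∈ T) :
    mkFlip c T t = true := by simp [mkFlip, ht]

theorem flip_false (c : S → S) {g : S → Bool} (hg : Flip c g) {t : S} (ht : g (c t) = true) :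
    g t = false := by
  have := hg t
  rw [ht] at this
  cases h : g t
  · rfl
  · rw [h] at this; simp at this

/-- The basic per-letter count. -/
noncomputable def cnt (c : S → S) (T : Finset S) : ℕ :=
  Set.ncard {g : S → Bool | Flip c g ∧ ∀ t ∈ T, g t = true}

theorem cnt_pos (c : S → S) (hinv : Function.Involutive c) (hfix : ∀ s, c s ≠ s)
    {T : Finset S} (hT : Con c T) : 0 < cnt c T := by
  rw [cnt, Set.ncard_pos (Set.toFinite _)]
  exact ⟨mkFlip c T, mkFlip_flip c hinv hfix hT, fun t ht => mkFlip_true c ht⟩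

theorem cnt_conflict (c : S → S) {T : Finset S} {t : S} (h1 : t ∈ T) (h2 : c t ∈ T) :
    cnt c T = 0 := by
  have : {g : S → Bool | Flip c g ∧ ∀ t ∈ T, g t = true} = ∅ := by
    ext g
    simp only [Set.mem_setOf_eq, Set.mem_empty_iff_false, iff_false, not_and]
    intro hf hall
    have := hf t
    rw [hall t h1, hall (c t) h2] at this
    simp at this
  rw [cnt, this, Set.ncard_empty]

/-- Flip a `flip`-function at the pair of `t`. -/
def flipAt (c : S → S) (t : S) (g : S → Bool) : S → Bool :=
  fun s => if s = t ∨ s = c t then !g s else g s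

theorem flipAt_flip (c : S → S) (hinv : Function.Involutive c) {t : S} {g : S → Bool}
    (hg : Flip c g) : Flip c (flipAt c t g) := by
  intro s
  unfold flipAt
  have key : (c s = t ∨ c s = c t) ↔ (s = t ∨ s = c t) := by
    constructor
    · rintro (h | h)
      · right; rw [← h, hinv]
      · left; exact hinv.injective h
    · rintro (h | h)
      · right; rw [h]
      · left; rw [h, hinv]
  by_cases h : s = t ∨ s = c t
  · simp only [if_pos h, if_pos (key.2 h), hg s]
  · simp only [if_neg h, if_neg (fun hc => h (key.1 hc)), hg s]

theorem flipAt_invol (c : S → S) (t : S) : Function.Involutive (flipAt c t) := by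
  intro g
  funext s
  unfold flipAt
  by_cases h : s = t ∨ s = c t <;> simp [h]

theorem cnt_insert (c : S → S) (hinv : Function.Involutive c) {T : Finset S} {t : S}
    (hT : Con c (insert t T)) (ht : t ∉ T) :
    cnt c (insert t T) * 2 = cnt c T := by
  classical
  have hct : c t ∉ T := fun h => hT t (mem_insert_self t T) (mem_insert_of_mem h)
  have hTt : ∀ x ∈ T, x ≠ t ∧ x ≠ c t := by
    intro x hx
    refine ⟨fun h => ht (h ▸ hx), fun h => hct (h ▸ hx)⟩
  set A : Set (S → Bool) := {g | (Flip c g ∧ ∀ x ∈ T, g x = true) ∧ g t = true} with hA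
  set B : Set (S → Bool) := {g | (Flip c g ∧ ∀ x ∈ T, g x = true) ∧ g t = false} with hB
  have hunion : {g : S → Bool | Flip c g ∧ ∀ x ∈ T, g x = true} = A ∪ B := by
    ext g
    simp only [hA, hB, Set.mem_setOf_eq, Set.mem_union]
    constructor
    · intro h
      cases hgt : g t
      · exact Or.inr ⟨h, rfl⟩
      · exact Or.inl ⟨h, rfl⟩
    · rintro (⟨h, _⟩ | ⟨h, _⟩) <;> exact h
  have hdisj : Disjoint A B := by
    rw [Set.disjoint_left]
    rintro g ⟨_, h1⟩ ⟨_, h2⟩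
    rw [h1] at h2; exact absurd h2 (by simp)
  have himg : ∀ g ∈ A, flipAt c t g ∈ B := by
    rintro g ⟨⟨hf, hall⟩, hgt⟩
    refine ⟨⟨flipAt_flip c hinv hf, ?_⟩, ?_⟩
    · intro x hx
      have hx' := hTt x hx
      simp only [flipAt, if_neg (by tauto : ¬(x = t ∨ x = c t))]
      exact hall x hx
    · simp only [flipAt, if_pos (Or.inl rfl), hgt]
      rfl
  have himg' : ∀ g ∈ B, flipAt c t g ∈ A := by
    rintro g ⟨⟨hf, hall⟩, hgt⟩
    refine ⟨⟨flipAt_flip c hinv hf, ?_⟩, ?_⟩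
    · intro x hx
      have hx' := hTt x hx
      simp only [flipAt, if_neg (by tauto : ¬(x = t ∨ x = c t))]
      exact hall x hx
    · simp only [flipAt, if_pos (Or.inl rfl), hgt]
      rfl
  have hBA : B = flipAt c t '' A := by
    apply Set.eq_of_subset_of_subset
    · intro g hg
      exact ⟨flipAt c t g, himg' g hg, flipAt_invol c t g⟩
    · rintro _ ⟨g, hg, rfl⟩
      exact himg g hg
  have hcardB : B.ncard = A.ncard := by
    rw [hBA]
    exact Set.ncard_image_of_injective A (flipAt_invol c t).injective
  have hAcnt : A.ncard = cnt c (insert t T) := by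
    apply congrArg
    ext g
    simp only [hA, Set.mem_setOf_eq, Finset.mem_insert]
    constructor
    · rintro ⟨⟨hf, hall⟩, hgt⟩
      exact ⟨hf, fun x hx => hx.elim (fun h => h ▸ hgt) (hall x)⟩
    · rintro ⟨hf, hall⟩
      exact ⟨⟨hf, fun x hx => hall x (Or.inr hx)⟩, hall t (Or.inl rfl)⟩
  have h2 : cnt c T = A.ncard + A.ncard := by
    rw [cnt, hunion, Set.ncard_union_eq hdisj (Set.toFinite _) (Set.toFinite _), hcardB]
  rw [← hAcnt, h2]
  ring

variable {d : ℕ}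

/-- The region determined by letter constraints `L`. -/
def Region (c : S → S) (L : Fin d → Finset S) : Set (Fin d → S → Bool) :=
  {y | ∀ i, Flip c (y i) ∧ ∀ t ∈ L i, y i t = true}

/-- Boolean-model cube of a word. -/
def gcube (v : Fin d → S) : Set (Fin d → S → Bool) :=
  {y | ∀ i, y i (v i) = true}

theorem region_card (c : S → S) (L : Fin d → Finset S) :
    (Region c L).ncard = ∏ i, cnt c (L i) := by
  rw [← Nat.card_coe_set_eq]
  have e1 : ↥(Region c L)
      ≃ {y : Fin d → S → Bool // ∀ i, Flip c (y i) ∧ ∀ t ∈ L i, y i t = true} :=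
    Equiv.subtypeEquivRight (fun y => Iff.rfl)
  have e2 : {y : Fin d → S → Bool // ∀ i, Flip c (y i) ∧ ∀ t ∈ L i, y i t = true}
      ≃ ∀ i : Fin d, {g : S → Bool // Flip c g ∧ ∀ t ∈ L i, g t = true} :=
    @Equiv.subtypePiEquivPi (Fin d) (fun _ => S → Bool)
      (fun i g => Flip c g ∧ ∀ t ∈ L i, g t = true)
  rw [Nat.card_congr (e1.trans e2), Nat.card_pi]
  rfl

theorem region_inter_gcube (c : S → S) (L : Fin d → Finset S) (v : Fin d → S) :
    Region c L ∩ gcube v = Region c (fun i => insert (v i) (L i)) := by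
  ext y
  simp only [Region, gcube, Set.mem_inter_iff, Set.mem_setOf_eq]
  constructor
  · rintro ⟨h1, h2⟩ 
    intro i
    refine ⟨(h1 i).1, fun t ht => ?_⟩
    rcases Finset.mem_insert.1 ht with rfl | ht'
    · exact h2 i
    · exact (h1 i).2 t ht'
  · intro h
    exact ⟨fun i => ⟨(h i).1, fun t ht => (h i).2 t (Finset.mem_insert_of_mem ht)⟩,
      fun i => (h i).2 (v i) (Finset.mem_insert_self _ _)⟩

theorem pieces_disjoint (c : S → S) (L : Fin d → Finset S) {v v' : Fin d → S}
    (h : ∃ j, v' j = c (v j)) :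
    Disjoint (Region c L ∩ gcube v) (Region c L ∩ gcube v') := by
  rw [Set.disjoint_left]
  rintro y ⟨hy, hv⟩ ⟨_, hv'⟩
  obtain ⟨j, hj⟩ := h
  have h1 : y j (v j) = true := hv j
  have h2 : y j (c (v j)) = true := by rw [← hj]; exact hv' j
  have := (hy j).1 (v j)
  rw [h1, h2] at this
  simp at this

/-- `ncard` of a finite disjoint union. -/
theorem ncard_biUnion {α β : Type*} (s : Finset α) (f : α → Set β)
    (hfin : ∀ a ∈ s, (f a).Finite)
    (hdisj : ∀ a ∈ s, ∀ b ∈ s, a ≠ b → Disjoint (f a) (f b)) :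
    (⋃ a ∈ s, f a).ncard = ∑ a ∈ s, (f a).ncard := by
  classical
  induction s using Finset.induction_on with
  | empty => simp
  | @insert a s' hx ih =>
    rw [Finset.sum_insert hx]
    have : (⋃ x ∈ insert a s', f x) = f a ∪ ⋃ x ∈ s', f x := by
      simp [Set.biUnion_insert]
    rw [this]
    have hd : Disjoint (f a) (⋃ x ∈ s', f x) := by
      rw [Set.disjoint_iUnion_right]
      intro b
      rw [Set.disjoint_iUnion_right]
      intro hb
      exact hdisj a (mem_insert_self a s') b (mem_insert_of_mem hb)
        (fun h => hx (h ▸ hb))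
    have hfin2 : (⋃ x ∈ s', f x).Finite :=
      Set.Finite.biUnion (Finset.finite_toSet s')
        (fun x hx' => hfin x (mem_insert_of_mem hx'))
    rw [Set.ncard_union_eq hd (hfin a (mem_insert_self a s')) hfin2,
      ih (fun x hx' => hfin x (mem_insert_of_mem hx'))
        (fun x hx' y hy' => hdisj x (mem_insert_of_mem hx') y (mem_insert_of_mem hy'))]

/-- Master counting lemma: a code partitions any region it meets. -/
theorem master (c : S → S) (L : Fin d → Finset S) (X : Set (Fin d → S))
    (hXd : ∀ u ∈ X, ∀ v ∈ X, u ≠ v → ∃ j, v j = c (u j)) :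
    (Region c L ∩ ⋃ v ∈ X, gcube v).ncard
      = ∑ v ∈ (X.toFinite).toFinset, ∏ i, cnt c (insert (v i) (L i)) := by
  classical
  have hre : (Region c L ∩ ⋃ v ∈ X, gcube v)
      = ⋃ v ∈ (X.toFinite).toFinset, (Region c L ∩ gcube v) := by
    rw [Set.inter_iUnion₂]
    apply Set.iUnion_congr
    intro v
    ext y
    simp [Set.Finite.mem_toFinset]
  rw [hre, ncard_biUnion]
  · apply Finset.sum_congr rfl
    intro v hv
    rw [region_inter_gcube, region_card]
  · intro a _; exact Set.toFinite _
  · intro a ha b hb hab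
    apply pieces_disjoint
    exact hXd a ((X.toFinite).mem_toFinset.1 ha) b ((X.toFinite).mem_toFinset.1 hb) hab

theorem master_cover (c : S → S) (L : Fin d → Finset S) (X : Set (Fin d → S))
    (hXd : ∀ u ∈ X, ∀ v ∈ X, u ≠ v → ∃ j, v j = c (u j))
    (hcov : Region c L ⊆ ⋃ v ∈ X, gcube v) :
    (∏ i, cnt c (L i)) = ∑ v ∈ (X.toFinite).toFinset, ∏ i, cnt c (insert (v i) (L i)) := by
  rw [← master c L X hXd, Set.inter_eq_self_of_subset_left hcov, region_card]

/-- Compatibility: no position carries complementary letters. -/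
def Compat (c : S → S) (u v : Fin d → S) : Prop := ∀ i, v i ≠ c (u i)

/-- Number of positions where two words differ. -/
noncomputable def kdiff (u v : Fin d → S) : ℕ :=
  (Finset.univ.filter (fun i => v i ≠ u i)).card

/-- The relative measure of the box of `v` inside the box of `u`. -/
noncomputable def qm (c : S → S) (u v : Fin d → S) : ℚ :=
  if Compat c u v then (2 : ℚ)⁻¹ ^ kdiff u v else 0

/-- Per-letter factor of a piece relative to constraint set `T`. -/
noncomputable def fac (c : S → S) (T : Finset S) (s : S) : ℚ :=
  if s ∈ T then 1 else if c s ∈ T then 0 else 2⁻¹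

theorem kdiff_comm (u v : Fin d → S) : kdiff u v = kdiff v u := by
  unfold kdiff
  congr 1
  apply Finset.filter_congr
  intro i _
  simp [ne_comm]

theorem compat_comm (c : S → S) (hinv : Function.Involutive c) (u v : Fin d → S) :
    Compat c u v ↔ Compat c v u := by
  unfold Compat
  constructor <;> intro h i <;> intro he <;> exact h i (by rw [he, hinv])

theorem qm_comm (c : S → S) (hinv : Function.Involutive c) (u v : Fin d → S) :
    qm c u v = qm c v u := by
  unfold qm
  rw [kdiff_comm]
  by_cases h : Compat c u v
  · rw [if_pos h, if_pos ((compat_comm c hinv u v).1 h)]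
  · rw [if_neg h, if_neg (fun h' => h ((compat_comm c hinv u v).2 h'))]

theorem qm_eq_pow (c : S → S) {u v : Fin d → S} (h : Compat c u v) :
    qm c u v = (2 : ℚ)⁻¹ ^ kdiff u v := if_pos h

theorem qm_pos (c : S → S) {u v : Fin d → S} (h : Compat c u v) : 0 < qm c u v := by
  rw [qm_eq_pow c h]; positivity

theorem qm_le_of_le (c : S → S) {u v : Fin d → S} {n : ℕ} (h : n ≤ kdiff u v) :
    qm c u v ≤ (2 : ℚ)⁻¹ ^ n := by
  unfold qm
  by_cases hc : Compat c u v
  · rw [if_pos hc]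
    exact pow_le_pow_of_le_one (by norm_num) (by norm_num) h
  · rw [if_neg hc]; positivity

theorem cnt_insert_cast (c : S → S) (hinv : Function.Involutive c) (hfix : ∀ s, c s ≠ s)
    {T : Finset S} (hT : Con c T) (s : S) :
    (cnt c (insert s T) : ℚ) = fac c T s * cnt c T := by
  unfold fac
  by_cases h1 : s ∈ T
  · rw [Finset.insert_eq_self.2 h1, if_pos h1, one_mul]
  · rw [if_neg h1]
    by_cases h2 : c s ∈ T
    · rw [if_pos h2, zero_mul]
      rw [cnt_conflict c (Finset.mem_insert_self s T) (Finset.mem_insert_of_mem h2)]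
      simp
    · rw [if_neg h2]
      have hcon : Con c (insert s T) := by
        intro x hx
        rcases Finset.mem_insert.1 hx with rfl | hx'
        · intro hc
          rcases Finset.mem_insert.1 hc with h | h
          · exact hfix x h
          · exact h2 h
        · intro hc
          rcases Finset.mem_insert.1 hc with h | h
          · exact h2 (by rw [← h, hinv]; exact hx')
          · exact hT x hx' h
      have hins := cnt_insert c hinv hcon h1
      have hq : (cnt c (insert s T) : ℚ) * 2 = cnt c T := by exact_mod_cast hins
      linarith

theorem qsum_gen (c : S → S) (hinv : Function.Involutive c) (hfix : ∀ s, c s ≠ s)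
    (L : Fin d → Finset S) (hL : ∀ i, Con c (L i)) (X : Set (Fin d → S))
    (hXd : ∀ u ∈ X, ∀ v ∈ X, u ≠ v → ∃ j, v j = c (u j))
    (hcov : Region c L ⊆ ⋃ v ∈ X, gcube v) :
    ∑ v ∈ (X.toFinite).toFinset, (∏ i, fac c (L i) (v i)) = 1 := by
  have key := master_cover c L X hXd hcov
  have keyq : (∏ i, (cnt c (L i) : ℚ))
      = ∑ v ∈ (X.toFinite).toFinset, ∏ i, (cnt c (insert (v i) (L i)) : ℚ) := by
    exact_mod_cast key
  have hterm : ∀ v : Fin d → S,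
      (∏ i, (cnt c (insert (v i) (L i)) : ℚ))
        = (∏ i, fac c (L i) (v i)) * ∏ i, (cnt c (L i) : ℚ) := by
    intro v
    rw [← Finset.prod_mul_distrib]
    apply Finset.prod_congr rfl
    intro i _
    exact cnt_insert_cast c hinv hfix (hL i) (v i)
  rw [Finset.sum_congr rfl (fun v _ => hterm v), ← Finset.sum_mul] at keyq
  have hpos : (0 : ℚ) < ∏ i, (cnt c (L i) : ℚ) := by
    apply Finset.prod_pos
    intro i _
    exact_mod_cast cnt_pos c hinv hfix (hL i)
  have h1 : (∑ v ∈ (X.toFinite).toFinset, ∏ i, fac c (L i) (v i))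
      * (∏ i, (cnt c (L i) : ℚ)) = 1 * (∏ i, (cnt c (L i) : ℚ)) := by
    rw [one_mul]; linarith [keyq]
  exact mul_right_cancel₀ hpos.ne' h1

theorem prod_fac_singleton (c : S → S) (hinv : Function.Involutive c) (hfix : ∀ s, c s ≠ s)
    (u v : Fin d → S) :
    (∏ i, fac c ({u i} : Finset S) (v i)) = qm c u v := by
  by_cases hc : Compat c u v
  · rw [qm_eq_pow c hc]
    have hterm : ∀ i : Fin d, fac c ({u i} : Finset S) (v i)
        = if v i = u i then 1 else 2⁻¹ := by
      intro i
      unfold fac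
      by_cases h : v i = u i
      · simp [h]
      · have h2 : ¬ c (v i) ∈ ({u i} : Finset S) := by
          simp only [Finset.mem_singleton]
          intro hvc
          exact hc i (by rw [← hvc, hinv])
        rw [if_neg (by simpa using h), if_neg h2, if_neg h]
    rw [Finset.prod_congr rfl (fun i _ => hterm i), Finset.prod_ite,
      Finset.prod_const_one, Finset.prod_const, one_mul]
    congr 1
  · have hj := not_forall.1 hc
    obtain ⟨j, hj⟩ := hj
    have hvj : v j = c (u j) := not_not.1 hj
    rw [qm, if_neg hc]
    apply Finset.prod_eq_zero (Finset.mem_univ j)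
    unfold fac
    have h1 : ¬ v j ∈ ({u j} : Finset S) := by
      simp only [Finset.mem_singleton]
      intro h
      exact hfix (u j) (by rw [← hvj, h])
    rw [if_neg h1, if_pos (by simp [hvj, hinv (u j)])]

theorem region_mono (c : S → S) {L1 L2 : Fin d → Finset S} (h : ∀ i, L1 i ⊆ L2 i) :
    Region c L2 ⊆ Region c L1 := by
  intro y hy i
  exact ⟨(hy i).1, fun t ht => (hy i).2 t (h i ht)⟩

theorem con_singleton (c : S → S) (hfix : ∀ s, c s ≠ s) (s : S) :
    Con c ({s} : Finset S) := by
  intro t ht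
  simp only [Finset.mem_singleton] at ht ⊢
  subst ht
  exact fun h => hfix t h

theorem qsum_singleton (c : S → S) (hinv : Function.Involutive c) (hfix : ∀ s, c s ≠ s)
    (u : Fin d → S) (X : Set (Fin d → S))
    (hXd : ∀ u' ∈ X, ∀ v ∈ X, u' ≠ v → ∃ j, v j = c (u' j))
    (hcov : Region c (fun i => ({u i} : Finset S)) ⊆ ⋃ v ∈ X, gcube v) :
    ∑ v ∈ (X.toFinite).toFinset, qm c u v = 1 := by
  have h := qsum_gen c hinv hfix (fun i => ({u i} : Finset S))
    (fun i => con_singleton c hfix (u i)) X hXd hcov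
  rw [← h]
  exact Finset.sum_congr rfl (fun v _ => (prod_fac_singleton c hinv hfix u v).symm)

theorem fac_pair (c : S → S) (hinv : Function.Involutive c) (hfix : ∀ s, c s ≠ s)
    {p z : S} (hz1 : z ≠ p) (hz2 : z ≠ c p) (x : S) :
    fac c ({p, z} : Finset S) x
      = (if x = z then 2 else if x = c z then 0 else 1) * fac c ({p} : Finset S) x := by
  have hzz : c z ≠ z := hfix z
  have hcpz : c p ≠ z := fun h => hz2 h.symm
  have hczp : c z ≠ p := fun h => hz2 (by rw [← h, hinv])
  unfold fac
  simp only [Finset.mem_insert, Finset.mem_singleton]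
  by_cases h1 : x = p
  · subst h1
    rw [if_pos (Or.inl rfl), if_neg (fun h => hz1 h.symm), if_neg (fun h => hczp h.symm),
      if_pos rfl]
    norm_num
  · by_cases h2 : x = z
    · subst h2
      rw [if_pos (Or.inr rfl), if_pos rfl, if_neg hz1, if_neg hczp]
      norm_num
    · by_cases h3 : x = c z
      · subst h3
        rw [if_neg (fun h => h.elim hczp hzz), if_pos (by rw [hinv]; exact Or.inr rfl),
          if_neg hzz, if_pos rfl]
        norm_num
      · by_cases h4 : x = c p
        · subst h4
          rw [if_neg (fun h => h.elim (hfix p) hcpz), if_pos (by rw [hinv]; exact Or.inl rfl),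
            if_neg hcpz, if_neg (fun h => hz1 (hinv.injective h).symm),
            if_neg (hfix p), if_pos (hinv p)]
          norm_num
        · have hcx1 : c x ≠ p := fun h => h4 (by rw [← h, hinv])
          have hcx2 : c x ≠ z := fun h => h3 (by rw [← h, hinv])
          rw [if_neg (fun h => h.elim h1 h2), if_neg (fun h => h.elim hcx1 hcx2),
            if_neg h2, if_neg h3, if_neg h1, if_neg hcx1]
          norm_num

theorem balance (c : S → S) (hinv : Function.Involutive c) (hfix : ∀ s, c s ≠ s)
    (u : Fin d → S) (X : Set (Fin d → S))
    (hXd : ∀ u' ∈ X, ∀ v ∈ X, u' ≠ v → ∃ j, v j = c (u' j))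
    (hcov : Region c (fun i => ({u i} : Finset S)) ⊆ ⋃ v ∈ X, gcube v)
    (a : Fin d) (z : S) (hz1 : z ≠ u a) (hz2 : z ≠ c (u a)) :
    ∑ v ∈ ((X.toFinite).toFinset).filter (fun v => v a = z), qm c u v
      = ∑ v ∈ ((X.toFinite).toFinset).filter (fun v => v a = c z), qm c u v := by
  classical
  set L : Fin d → Finset S :=
    Function.update (fun i => ({u i} : Finset S)) a ({u a, z} : Finset S) with hLdef
  have hLa : L a = ({u a, z} : Finset S) := Function.update_self a _ _
  have hLi : ∀ i, i ≠ a → L i = ({u i} : Finset S) := by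
    intro i hi
    exact Function.update_of_ne hi _ _
  have hL : ∀ i, Con c (L i) := by
    intro i
    by_cases hi : i = a
    · subst hi
      rw [hLa]
      intro t ht
      simp only [Finset.mem_insert, Finset.mem_singleton] at ht ⊢
      push_neg
      rcases ht with rfl | rfl
      · exact ⟨hfix _, fun h => hz2 h.symm⟩
      · exact ⟨fun h => hz2 (by rw [← h, hinv]), hfix _⟩
    · rw [hLi i hi]
      exact con_singleton c hfix (u i)
  have hcov' : Region c L ⊆ ⋃ v ∈ X, gcube v := by
    refine subset_trans (region_mono c ?_) hcov
    intro i
    by_cases hi : i = a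
    · subst hi
      rw [hLa]
      intro t ht
      rw [Finset.mem_singleton] at ht
      subst ht
      exact Finset.mem_insert_self _ _
    · rw [hLi i hi]
  have hsum1 := qsum_gen c hinv hfix L hL X hXd hcov'
  have hsum0 := qsum_singleton c hinv hfix u X hXd hcov
  -- rewrite each term of hsum1
  have hterm : ∀ v : Fin d → S, (∏ i, fac c (L i) (v i))
      = (if v a = z then 2 else if v a = c z then 0 else 1) * qm c u v := by
    intro v
    rw [← prod_fac_singleton c hinv hfix u v]
    rw [← Finset.mul_prod_erase Finset.univ _ (Finset.mem_univ a),
      ← Finset.mul_prod_erase Finset.univ (fun i => fac c ({u i} : Finset S) (v i))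
        (Finset.mem_univ a), ← mul_assoc]
    have herase : ∏ i ∈ Finset.univ.erase a, fac c (L i) (v i)
        = ∏ i ∈ Finset.univ.erase a, fac c ({u i} : Finset S) (v i) := by
      apply Finset.prod_congr rfl
      intro i hi
      rw [hLi i (Finset.mem_erase.1 hi).1]
    rw [herase, hLa, fac_pair c hinv hfix hz1 hz2 (v a)]
  rw [Finset.sum_congr rfl (fun v _ => hterm v)] at hsum1
  -- split sums
  set F := (X.toFinite).toFinset with hF
  set A := F.filter (fun v => v a = z) with hA
  set NB := F.filter (fun v => ¬ v a = z) with hNB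
  set B := NB.filter (fun v => v a = c z) with hB
  set C := NB.filter (fun v => ¬ v a = c z) with hC
  have hsplit1 : ∀ f : (Fin d → S) → ℚ, ∑ v ∈ F, f v = ∑ v ∈ A, f v + ∑ v ∈ NB, f v := by
    intro f
    rw [hA, hNB, Finset.sum_filter_add_sum_filter_not]
  have hsplit2 : ∀ f : (Fin d → S) → ℚ, ∑ v ∈ NB, f v = ∑ v ∈ B, f v + ∑ v ∈ C, f v := by
    intro f
    rw [hB, hC, Finset.sum_filter_add_sum_filter_not]
  have e1 : ∑ v ∈ A, (if v a = z then 2 else if v a = c z then 0 else 1) * qm c u v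
      = 2 * ∑ v ∈ A, qm c u v := by
    rw [Finset.mul_sum]
    apply Finset.sum_congr rfl
    intro v hv
    rw [if_pos (Finset.mem_filter.1 hv).2]
  have e2 : ∑ v ∈ B, (if v a = z then 2 else if v a = c z then 0 else 1) * qm c u v = 0 := by
    apply Finset.sum_eq_zero
    intro v hv
    have h1 := (Finset.mem_filter.1 hv).2
    have h2 := (Finset.mem_filter.1 (Finset.mem_filter.1 hv).1).2
    rw [if_neg h2, if_pos h1, zero_mul]
  have e3 : ∑ v ∈ C, (if v a = z then 2 else if v a = c z then 0 else 1) * qm c u v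
      = ∑ v ∈ C, qm c u v := by
    apply Finset.sum_congr rfl
    intro v hv
    have h1 := (Finset.mem_filter.1 hv).2
    have h2 := (Finset.mem_filter.1 (Finset.mem_filter.1 hv).1).2
    rw [if_neg h2, if_neg h1, one_mul]
  rw [hsplit1, hsplit2, e1, e2, e3] at hsum1
  rw [hsplit1 (qm c u), hsplit2 (qm c u)] at hsum0
  have hBB : B = F.filter (fun v => v a = c z) := by
    rw [hB, hNB, Finset.filter_filter]
    apply Finset.filter_congr
    intro v _
    constructor
    · intro h; exact h.2
    · intro h; exact ⟨fun hz' => hfix z (h.symm.trans hz'), h⟩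
  rw [← hBB]
  linarith

/-- A covering configuration. -/
def Cfg (c : S → S) (u : Fin d → S) (X : Set (Fin d → S)) : Prop :=
  (∀ v ∈ X, ∀ v' ∈ X, v ≠ v' → ∃ j, v' j = c (v j)) ∧
  (∀ v ∈ X, ∀ v' ∈ X, ¬ TwinPair c v v') ∧
  (∀ v ∈ X, Compat c u v) ∧ (∀ v ∈ X, v ≠ u) ∧
  (Region c (fun i => ({u i} : Finset S)) ⊆ ⋃ v ∈ X, gcube v)

theorem kdiff_pos {u v : Fin d → S} (h : v ≠ u) : 1 ≤ kdiff u v := by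
  rw [Nat.one_le_iff_ne_zero]
  intro h0
  apply h
  funext i
  by_contra hi
  have : i ∈ Finset.univ.filter (fun i => v i ≠ u i) := by
    simp [hi]
  rw [Finset.card_eq_zero.1 h0] at this
  exact absurd this (Finset.notMem_empty i)

theorem conflict_coord (c : S → S) (hinv : Function.Involutive c) {u v v' : Fin d → S}
    (hcv : Compat c u v) (hcv' : Compat c u v') (hd : ∃ j, v' j = c (v j)) :
    ∃ j, v' j = c (v j) ∧ v j ≠ u j ∧ v' j ≠ u j := by
  obtain ⟨j, hj⟩ := hd
  refine ⟨j, hj, ?_, ?_⟩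
  · intro h
    exact hcv' j (by rw [hj, h])
  · intro h
    apply hcv j
    have hvj : v j = c (v' j) := by rw [hj, hinv]
    rw [h] at hvj
    exact hvj

/-- positions where `v` differs from `u`. -/
noncomputable def dset (u v : Fin d → S) : Finset (Fin d) :=
  Finset.univ.filter (fun i => v i ≠ u i)

theorem mem_dset {u v : Fin d → S} {i : Fin d} : i ∈ dset u v ↔ v i ≠ u i := by
  simp [dset]

theorem kdiff_eq_card_dset (u v : Fin d → S) : kdiff u v = (dset u v).card := rfl

theorem dset_eq_pair {u v : Fin d → S} {a j : Fin d} (hk : kdiff u v = 2)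
    (ha : v a ≠ u a) (hj : v j ≠ u j) (hne : a ≠ j) : dset u v = {a, j} := by
  have hsub : ({a, j} : Finset (Fin d)) ⊆ dset u v := by
    intro x hx
    rcases Finset.mem_insert.1 hx with rfl | hx'
    · exact mem_dset.2 ha
    · rw [Finset.mem_singleton] at hx'
      subst hx'
      exact mem_dset.2 hj
  exact (Finset.eq_of_subset_of_card_le hsub
    (by rw [← kdiff_eq_card_dset, hk, Finset.card_insert_of_notMem (by simp [hne]),
      Finset.card_singleton])).symm

theorem eq_off_dset {u v : Fin d → S} {i : Fin d} (h : i ∉ dset u v) : v i = u i := by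
  by_contra hc
  exact h (mem_dset.2 hc)

theorem twin_of_same_letter (c : S → S) (hinv : Function.Involutive c)
    (hfix : ∀ s, c s ≠ s) {u : Fin d → S} {X : Set (Fin d → S)} (hCfg : Cfg c u X)
    {v v' : Fin d → S} (hv : v ∈ X) (hv' : v' ∈ X) (hne : v ≠ v')
    (hk : kdiff u v = 2) (hk' : kdiff u v' = 2) {a : Fin d}
    (ha : v a ≠ u a) (heq : v' a = v a) : False := by
  obtain ⟨hcode, htwin, hcompat, _, _⟩ := hCfg
  obtain ⟨j, hj, hju, hju'⟩ := conflict_coord c hinv (hcompat v hv) (hcompat v' hv')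
    (hcode v hv v' hv' hne)
  have hja : j ≠ a := by
    rintro rfl
    rw [heq] at hj
    exact hfix (v j) hj.symm
  have hd1 : dset u v = {a, j} := dset_eq_pair hk ha hju (fun h => hja h.symm)
  have ha' : v' a ≠ u a := by rw [heq]; exact ha
  have hd2 : dset u v' = {a, j} := dset_eq_pair hk' ha' hju' (fun h => hja h.symm)
  apply htwin v hv v' hv'
  refine ⟨j, hj, fun i hij => ?_⟩
  by_cases hia : i = a
  · subst hia; exact heq
  · have hi1 : i ∉ dset u v := by
      rw [hd1]
      simp [hia, hij]
    have hi2 : i ∉ dset u v' := by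
      rw [hd2]
      simp [hia, hij]
    rw [eq_off_dset hi1, eq_off_dset hi2]

theorem card_balance (c : S → S) (hinv : Function.Involutive c) (hfix : ∀ s, c s ≠ s)
    {u : Fin d → S} {X : Set (Fin d → S)} (hCfg : Cfg c u X)
    (hall : ∀ v ∈ X, qm c u v = (4 : ℚ)⁻¹)
    {a : Fin d} {z : S} (hz1 : z ≠ u a) (hz2 : z ≠ c (u a)) :
    (((X.toFinite).toFinset).filter (fun v => v a = z)).card
      = (((X.toFinite).toFinset).filter (fun v => v a = c z)).card := by
  obtain ⟨hcode, _, _, _, hcov⟩ := hCfg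
  have hb := balance c hinv hfix u X hcode hcov a z hz1 hz2
  have hmem : ∀ v ∈ (X.toFinite).toFinset, qm c u v = (4 : ℚ)⁻¹ := by
    intro v hv
    exact hall v ((X.toFinite).mem_toFinset.1 hv)
  rw [Finset.sum_congr rfl (fun v hv => hmem v (Finset.mem_filter.1 hv).1),
    Finset.sum_congr rfl (fun v hv => hmem v (Finset.mem_filter.1 hv).1),
    Finset.sum_const, Finset.sum_const] at hb
  simp only [nsmul_eq_mul] at hb
  have h4 : ((4 : ℚ)⁻¹) ≠ 0 := by norm_num
  exact_mod_cast mul_right_cancel₀ h4 hb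

/-- The `(2,2,2,2)` configuration is impossible. -/
theorem no_four (c : S → S) (hinv : Function.Involutive c) (hfix : ∀ s, c s ≠ s)
    {u : Fin d → S} {X : Set (Fin d → S)} (hCfg : Cfg c u X)
    (h4 : X.ncard = 4) (hall : ∀ v ∈ X, kdiff u v = 2) : False := by
  obtain ⟨v1, hv1⟩ : ∃ v1, v1 ∈ X := by
    have : 0 < X.ncard := by omega
    exact (Set.ncard_pos (Set.toFinite X)).1 this
  have h3 : (X \ {v1}).ncard = 3 := by
    rw [Set.ncard_diff_singleton_of_mem hv1, h4]
  obtain ⟨v2, v3, v4, h23, h24, h34, hXd⟩ := Set.ncard_eq_three.1 h3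
  have hv2 : v2 ∈ X ∧ v2 ≠ v1 := by
    have h : v2 ∈ X \ {v1} := by rw [hXd]; simp
    exact ⟨h.1, h.2⟩
  have hv3 : v3 ∈ X ∧ v3 ≠ v1 := by
    have h : v3 ∈ X \ {v1} := by rw [hXd]; simp
    exact ⟨h.1, h.2⟩
  have hv4 : v4 ∈ X ∧ v4 ≠ v1 := by
    have h : v4 ∈ X \ {v1} := by rw [hXd]; simp
    exact ⟨h.1, h.2⟩
  obtain ⟨hcode, htwin, hcompat, hneu, hcov⟩ := hCfg
  obtain ⟨j2, hj2, hj2u, hj2u'⟩ := conflict_coord c hinv (hcompat v1 hv1)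
    (hcompat v2 hv2.1) (hcode v1 hv1 v2 hv2.1 (Ne.symm hv2.2))
  obtain ⟨j3, hj3, hj3u, hj3u'⟩ := conflict_coord c hinv (hcompat v1 hv1)
    (hcompat v3 hv3.1) (hcode v1 hv1 v3 hv3.1 (Ne.symm hv3.2))
  obtain ⟨j4, hj4, hj4u, hj4u'⟩ := conflict_coord c hinv (hcompat v1 hv1)
    (hcompat v4 hv4.1) (hcode v1 hv1 v4 hv4.1 (Ne.symm hv4.2))
  have hkey : ∃ a : Fin d, ∃ x y : Fin d → S, x ∈ X ∧ y ∈ X ∧ x ≠ y ∧ x ≠ v1 ∧ y ≠ v1 ∧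
      x a = c (v1 a) ∧ y a = c (v1 a) ∧ v1 a ≠ u a := by
    by_cases h23' : j2 = j3
    · exact ⟨j2, v2, v3, hv2.1, hv3.1, h23, hv2.2, hv3.2, hj2, h23' ▸ hj3, hj2u⟩
    · by_cases h24' : j2 = j4
      · exact ⟨j2, v2, v4, hv2.1, hv4.1, h24, hv2.2, hv4.2, hj2, h24' ▸ hj4, hj2u⟩
      · by_cases h34' : j3 = j4
        · exact ⟨j3, v3, v4, hv3.1, hv4.1, h34, hv3.2, hv4.2, hj3, h34' ▸ hj4, hj3u⟩
        · exfalso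
          have hsub : ({j2, j3, j4} : Finset (Fin d)) ⊆ dset u v1 := by
            intro x hx
            simp only [Finset.mem_insert, Finset.mem_singleton] at hx
            rcases hx with rfl | rfl | rfl
            · exact mem_dset.2 hj2u
            · exact mem_dset.2 hj3u
            · exact mem_dset.2 hj4u
          have hcard : ({j2, j3, j4} : Finset (Fin d)).card = 3 := by
            rw [Finset.card_insert_of_notMem (by simp [h23', h24']),
              Finset.card_insert_of_notMem (by simp [h34']), Finset.card_singleton]
          have hle := Finset.card_le_card hsub
          rw [hcard, ← kdiff_eq_card_dset, hall v1 hv1] at hle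
          omega
  obtain ⟨a, x, y, hx, hy, hxy, hxv, hyv, hxa, hya, hva⟩ := hkey
  have hallq : ∀ v ∈ X, qm c u v = (4 : ℚ)⁻¹ := by
    intro v hv
    rw [qm_eq_pow c (hcompat v hv), hall v hv]
    norm_num
  have hcb := card_balance c hinv hfix
    ⟨hcode, htwin, hcompat, hneu, hcov⟩ hallq hva (hcompat v1 hv1 a)
  set F := (X.toFinite).toFinset with hF
  have hmemF : ∀ v, v ∈ F ↔ v ∈ X := fun v => (X.toFinite).mem_toFinset
  have hcz : 2 ≤ (F.filter (fun v => v a = c (v1 a))).card := by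
    have hsub : ({x, y} : Finset (Fin d → S)) ⊆ F.filter (fun v => v a = c (v1 a)) := by
      intro t ht
      simp only [Finset.mem_insert, Finset.mem_singleton] at ht
      rcases ht with rfl | rfl
      · exact Finset.mem_filter.2 ⟨(hmemF t).2 hx, hxa⟩
      · exact Finset.mem_filter.2 ⟨(hmemF t).2 hy, hya⟩
    have hcle := Finset.card_le_card hsub
    rwa [Finset.card_insert_of_notMem (by simp [hxy]), Finset.card_singleton] at hcle
  have hgt1 : 1 < (F.filter (fun v => v a = v1 a)).card := by
    have h2 : (2 : ℕ) ≤ (F.filter (fun v => v a = v1 a)).card := le_of_le_of_eq hcz hcb.symm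
    exact lt_of_lt_of_le Nat.one_lt_two h2
  obtain ⟨w', hw', hwne⟩ := Finset.exists_mem_ne hgt1 v1
  have hw'X : w' ∈ X := (hmemF w').1 (Finset.mem_filter.1 hw').1
  have hw'a : w' a = v1 a := (Finset.mem_filter.1 hw').2
  exact twin_of_same_letter c hinv hfix ⟨hcode, htwin, hcompat, hneu, hcov⟩
    hv1 hw'X hwne.symm (hall v1 hv1) (hall w' hw'X) hva hw'a

-- Section D2: reduction and main induction
theorem reduction (c : S → S) (hinv : Function.Involutive c) (hfix : ∀ s, c s ≠ s)
    {u : Fin d → S} {X : Set (Fin d → S)} (hCfg : Cfg c u X)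
    {vh : Fin d → S} (hvh : vh ∈ X) (hk : kdiff u vh = 1) :
    ∃ X' : Set (Fin d → S), Cfg c u X' ∧ X'.ncard + 1 = X.ncard := by
  classical
  obtain ⟨hcode, htwin, hcompat, hneu, hcov⟩ := hCfg
  obtain ⟨a, hafil⟩ := Finset.card_eq_one.1 hk
  have hmema : ∀ i : Fin d, i ∈ dset u vh ↔ i = a := by
    intro i
    rw [show dset u vh = {a} from hafil]
    exact Finset.mem_singleton
  have hva : vh a ≠ u a := mem_dset.1 ((hmema a).2 rfl)
  have hoff : ∀ i, i ≠ a → vh i = u i := by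
    intro i hi
    exact eq_off_dset (fun hmem => hi ((hmema i).1 hmem))
  have hcs : ∀ v ∈ X, v ≠ vh → v a = c (vh a) := by
    intro v hv hne
    obtain ⟨j, hj, hju, hju'⟩ := conflict_coord c hinv (hcompat vh hvh) (hcompat v hv)
      (hcode vh hvh v hv hne.symm)
    have hja : j = a := (hmema j).1 (mem_dset.2 hju)
    rw [← hja]
    exact hj
  set X' : Set (Fin d → S) := (fun v => Function.update v a (u a)) '' (X \ {vh}) with hX'
  have hinj : Set.InjOn (fun v => Function.update v a (u a)) (X \ {vh}) := by
    intro v hv v' hv' heq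
    funext i
    by_cases hi : i = a
    · subst hi
      rw [hcs v hv.1 hv.2, hcs v' hv'.1 hv'.2]
    · have h1 := congrFun heq i
      simpa [Function.update_of_ne hi] using h1
  have hup_mem : ∀ {w : Fin d → S}, w ∈ X' →
      ∃ v, v ∈ X ∧ v ≠ vh ∧ w = Function.update v a (u a) := by
    intro w hw
    obtain ⟨v, hv, rfl⟩ := hw
    exact ⟨v, hv.1, hv.2, rfl⟩
  have hupa : ∀ v : Fin d → S, Function.update v a (u a) a = u a := by
    intro v; simp
  have hupi : ∀ (v : Fin d → S) (i : Fin d), i ≠ a → Function.update v a (u a) i = v i := by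
    intro v i hi; simp [Function.update_of_ne hi]
  refine ⟨X', ⟨?_, ?_, ?_, ?_, ?_⟩, ?_⟩
  · -- code
    rintro w1 hw1 w2 hw2 hne
    obtain ⟨v1, hv1, hv1h, rfl⟩ := hup_mem hw1
    obtain ⟨v2, hv2, hv2h, rfl⟩ := hup_mem hw2
    have hne' : v1 ≠ v2 := fun h => hne (by rw [h])
    obtain ⟨j, hj, hju, hju'⟩ := conflict_coord c hinv (hcompat v1 hv1) (hcompat v2 hv2)
      (hcode v1 hv1 v2 hv2 hne')
    have hja : j ≠ a := by
      rintro rfl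
      rw [hcs v1 hv1 hv1h, hcs v2 hv2 hv2h, hinv] at hj
      exact hfix (vh j) hj
    exact ⟨j, by rw [hupi v1 j hja, hupi v2 j hja]; exact hj⟩
  · -- twin-free
    rintro w1 hw1 w2 hw2 ⟨j, hj, hrest⟩
    obtain ⟨v1, hv1, hv1h, rfl⟩ := hup_mem hw1
    obtain ⟨v2, hv2, hv2h, rfl⟩ := hup_mem hw2
    have hja : j ≠ a := by
      rintro rfl
      rw [hupa, hupa] at hj
      exact hfix (u j) hj.symm
    apply htwin v1 hv1 v2 hv2
    refine ⟨j, by rw [← hupi v1 j hja, ← hupi v2 j hja]; exact hj, ?_⟩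
    intro i hij
    by_cases hia : i = a
    · subst hia
      rw [hcs v1 hv1 hv1h, hcs v2 hv2 hv2h]
    · have := hrest i hij
      rw [hupi v1 i hia, hupi v2 i hia] at this
      exact this
  · -- compat
    rintro w hw
    obtain ⟨v, hv, hvh', rfl⟩ := hup_mem hw
    intro i
    by_cases hi : i = a
    · subst hi
      rw [hupa]
      exact fun h => hfix (u i) h.symm
    · rw [hupi v i hi]
      exact hcompat v hv i
  · -- ≠ u
    rintro w hw heq
    obtain ⟨v, hv, hvh', rfl⟩ := hup_mem hw
    have hoffv : ∀ i, i ≠ a → v i = u i := by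
      intro i hi
      rw [← hupi v i hi, heq]
    apply htwin vh hvh v hv
    refine ⟨a, hcs v hv hvh', ?_⟩
    intro i hia
    rw [hoffv i hia, hoff i hia]
  · -- coverage
    intro y hy
    set g : S → Bool := mkFlip c ({u a, c (vh a)} : Finset S) with hg
    have hTcon : ∀ t ∈ ({u a, c (vh a)} : Finset S), c t ∉ ({u a, c (vh a)} : Finset S) := by
      intro t ht
      simp only [Finset.mem_insert, Finset.mem_singleton] at ht ⊢
      push_neg
      rcases ht with rfl | rfl
      · exact ⟨hfix _, fun h => hva (hinv.injective h).symm⟩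
      · exact ⟨fun h => hva (by rw [← hinv (vh a), h]), fun h => hfix _ h⟩
    have hgflip : Flip c g := mkFlip_flip c hinv hfix hTcon
    set y' := Function.update y a g with hy'
    have hy'mem : y' ∈ Region c (fun i => ({u i} : Finset S)) := by
      intro i
      by_cases hi : i = a
      · subst hi
        rw [hy', Function.update_self]
        exact ⟨hgflip, fun t ht => by
          rw [Finset.mem_singleton] at ht
          subst ht
          exact mkFlip_true c (Finset.mem_insert_self _ _)⟩
      · rw [hy', Function.update_of_ne hi]
        exact hy i
    obtain ⟨T1, ⟨v, rfl⟩, hT2⟩ := hcov hy'mem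
    obtain ⟨hvX, hyv⟩ : v ∈ X ∧ y' ∈ gcube v := by
      simp only [Set.mem_iUnion] at hT2
      obtain ⟨hv, hmem⟩ := hT2
      exact ⟨hv, hmem⟩
  -- `v` cannot be `vh`
    have hvne : v ≠ vh := by
      rintro rfl
      have h1 : y' a (v a) = true := hyv a
      rw [hy', Function.update_self] at h1
      have h2 : g (c (c (v a))) = ! g (c (v a)) := hgflip (c (v a))
      rw [hinv] at h2
      have h3 : g (c (v a)) = true :=
        mkFlip_true c (Finset.mem_insert_of_mem (Finset.mem_singleton_self _))
      rw [h3, h1] at h2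
      simp at h2
    refine Set.mem_iUnion₂.2 ⟨Function.update v a (u a), ⟨v, ⟨hvX, hvne⟩, rfl⟩, ?_⟩
    intro i
    by_cases hi : i = a
    · subst hi
      rw [hupa]
      exact (hy i).2 (u i) (Finset.mem_singleton_self _)
    · rw [hupi v i hi]
      have := hyv i
      rw [hy', Function.update_of_ne hi] at this
      exact this
  · -- cardinality
    rw [hX', Set.ncard_image_of_injOn hinj]
    have h1 : vh ∈ X := hvh
    have := Set.ncard_diff_singleton_add_one h1 (Set.toFinite X)
    omega

theorem cfg_ge5 (c : S → S) (hinv : Function.Involutive c) (hfix : ∀ s, c s ≠ s) :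
    ∀ n : ℕ, ∀ (u : Fin d → S) (X : Set (Fin d → S)), Cfg c u X → X.ncard = n → 5 ≤ n := by
  intro n
  induction n using Nat.strong_induction_on with
  | _ n ih =>
  intro u X hCfg hn
  by_cases hex : ∃ vh ∈ X, kdiff u vh = 1
  · obtain ⟨vh, hvh, hk⟩ := hex
    obtain ⟨X', hCfg', hcard⟩ := reduction c hinv hfix hCfg hvh hk
    have h5 : 5 ≤ X'.ncard := ih X'.ncard (by omega) u X' hCfg' rfl
    omega
  · push_neg at hex
    obtain ⟨hcode, htwin, hcompat, hneu, hcov⟩ := hCfg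
    have hk2 : ∀ v ∈ X, 2 ≤ kdiff u v := by
      intro v hv
      have h1 := kdiff_pos (hneu v hv)
      have h2 := hex v hv
      omega
    have hsum := qsum_singleton c hinv hfix u X hcode hcov
    have hcardF : (X.toFinite).toFinset.card = n := by
      rw [← hn]
      exact (Set.ncard_eq_toFinset_card X (X.toFinite)).symm
    have hub : ∀ v ∈ (X.toFinite).toFinset, qm c u v ≤ (2 : ℚ)⁻¹ ^ 2 := by
      intro v hv
      exact qm_le_of_le c (hk2 v ((X.toFinite).mem_toFinset.1 hv))
    have hle := Finset.sum_le_card_nsmul _ _ _ hub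
    rw [hsum, hcardF, nsmul_eq_mul] at hle
    have hn4 : 4 ≤ n := by
      by_contra hlt
      push_neg at hlt
      have : (n : ℚ) ≤ 3 := by exact_mod_cast Nat.le_of_lt_succ hlt
      nlinarith
    by_cases h5 : 5 ≤ n
    · exact h5
    · exfalso
      have hn4' : n = 4 := by omega
      have hallk : ∀ v ∈ X, kdiff u v = 2 := by
        by_contra hcon
        push_neg at hcon
        obtain ⟨v0, hv0, hkv0⟩ := hcon
        have hk3 : 3 ≤ kdiff u v0 := by
          have := hk2 v0 hv0
          omega
        have hstrict : qm c u v0 < (2 : ℚ)⁻¹ ^ 2 := by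
          have := qm_le_of_le c hk3
          calc qm c u v0 ≤ (2 : ℚ)⁻¹ ^ 3 := this
            _ < (2 : ℚ)⁻¹ ^ 2 := by norm_num
        have hlt : ∑ v ∈ (X.toFinite).toFinset, qm c u v
            < ∑ _v ∈ (X.toFinite).toFinset, (2 : ℚ)⁻¹ ^ 2 :=
          Finset.sum_lt_sum hub ⟨v0, (X.toFinite).mem_toFinset.2 hv0, hstrict⟩
        rw [hsum, Finset.sum_const, hcardF, hn4', nsmul_eq_mul] at hlt
        norm_num at hlt
      exact no_four c hinv hfix ⟨hcode, htwin, hcompat, hneu, hcov⟩ (by omega) hallk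

theorem type5_aux {α : Type*} (F : Finset α) (f : α → ℚ) (hc : F.card = 5)
    (hsum : ∑ v ∈ F, f v = 1) (hpos : ∀ v ∈ F, 0 < f v)
    (hvals : ∀ v ∈ F, f v = 4⁻¹ ∨ f v ≤ 8⁻¹) :
    (F.filter (fun v => f v = 4⁻¹)).card = 3 ∧ ∀ v ∈ F, f v = 4⁻¹ ∨ f v = 8⁻¹ := by
  classical
  set A := F.filter (fun v => f v = 4⁻¹) with hA
  set B := F.filter (fun v => ¬ f v = 4⁻¹) with hB
  have hABcard : A.card + B.card = 5 := by
    rw [hA, hB, Finset.card_filter_add_card_filter_not, hc]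
  have hsplit : ∑ v ∈ A, f v + ∑ v ∈ B, f v = 1 := by
    rw [hA, hB, Finset.sum_filter_add_sum_filter_not, hsum]
  have hsA : ∑ v ∈ A, f v = (A.card : ℚ) * 4⁻¹ := by
    rw [Finset.sum_congr rfl (fun v hv => (Finset.mem_filter.1 hv).2), Finset.sum_const,
      nsmul_eq_mul]
  have hBle : ∑ v ∈ B, f v ≤ (B.card : ℚ) * 8⁻¹ := by
    have := Finset.sum_le_card_nsmul B f (8⁻¹ : ℚ) (fun v hv => by
      rcases hvals v (Finset.mem_filter.1 hv).1 with h | h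
      · exact absurd h (Finset.mem_filter.1 hv).2
      · exact h)
    rwa [nsmul_eq_mul] at this
  have hBpos : (0 : ℚ) ≤ ∑ v ∈ B, f v :=
    Finset.sum_nonneg (fun v hv => le_of_lt (hpos v (Finset.mem_filter.1 hv).1))
  have hAle : A.card ≤ 5 := by omega
  have hA3 : 3 ≤ A.card := by
    by_contra hlt
    push_neg at hlt
    have hac : (A.card : ℚ) ≤ 2 := by exact_mod_cast Nat.le_of_lt_succ hlt
    have hbc : (B.card : ℚ) = 5 - A.card := by
      have : (A.card : ℚ) + B.card = 5 := by exact_mod_cast hABcard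
      linarith
    rw [hsA] at hsplit
    nlinarith
  have hAcard : A.card = 3 := by
    rcases (by omega : A.card = 3 ∨ A.card = 4 ∨ A.card = 5) with h | h | h
    · exact h
    · exfalso
      have hBc : B.card = 1 := by omega
      have hBzero : ∑ v ∈ B, f v = 0 := by
        rw [hsA, h] at hsplit
        push_cast at hsplit
        linarith
      obtain ⟨v0, hv0⟩ := Finset.card_eq_one.1 hBc
      rw [hv0, Finset.sum_singleton] at hBzero
      have hv0B : v0 ∈ B := by rw [hv0]; exact Finset.mem_singleton_self v0
      have := hpos v0 (Finset.mem_filter.1 hv0B).1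
      linarith
    · exfalso
      rw [hsA, h] at hsplit
      push_cast at hsplit
      linarith
  refine ⟨hAcard, ?_⟩
  have hBc : B.card = 2 := by omega
  have hsB : ∑ v ∈ B, f v = 4⁻¹ := by
    rw [hsA, hAcard] at hsplit
    push_cast at hsplit
    linarith
  have hBall : ∀ v ∈ B, f v = 8⁻¹ := by
    by_contra hcon
    push_neg at hcon
    obtain ⟨v0, hv0, hne⟩ := hcon
    have hv0le : f v0 ≤ 8⁻¹ := by
      rcases hvals v0 (Finset.mem_filter.1 hv0).1 with h | h
      · exact absurd h (Finset.mem_filter.1 hv0).2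
      · exact h
    have hstrict : f v0 < 8⁻¹ := lt_of_le_of_ne hv0le hne
    have hBub : ∀ v ∈ B, f v ≤ (8⁻¹ : ℚ) := by
      intro v hv
      rcases hvals v (Finset.mem_filter.1 hv).1 with h | h
      · exact absurd h (Finset.mem_filter.1 hv).2
      · exact h
    have hlt : ∑ v ∈ B, f v < ∑ _v ∈ B, (8⁻¹ : ℚ) :=
      Finset.sum_lt_sum hBub ⟨v0, hv0, hstrict⟩
    rw [hsB, Finset.sum_const, hBc, nsmul_eq_mul] at hlt
    norm_num at hlt
  intro v hv
  by_cases h : f v = 4⁻¹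
  · exact Or.inl h
  · exact Or.inr (hBall v (Finset.mem_filter.2 ⟨hv, h⟩))

theorem five_type (c : S → S) (hinv : Function.Involutive c) (hfix : ∀ s, c s ≠ s)
    {u : Fin d → S} {X : Set (Fin d → S)} (hCfg : Cfg c u X) (h5 : X.ncard = 5) :
    (∀ v ∈ X, kdiff u v = 2 ∨ kdiff u v = 3) ∧
    (((X.toFinite).toFinset).filter (fun v => kdiff u v = 2)).card = 3 := by
  classical
  have hno1 : ∀ v ∈ X, kdiff u v ≠ 1 := by
    intro vh hvh hk
    obtain ⟨X', hCfg', hcard⟩ := reduction c hinv hfix hCfg hvh hk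
    have := cfg_ge5 c hinv hfix X'.ncard u X' hCfg' rfl
    omega
  obtain ⟨hcode, htwin, hcompat, hneu, hcov⟩ := hCfg
  have hk2 : ∀ v ∈ X, 2 ≤ kdiff u v := by
    intro v hv
    have h1 := kdiff_pos (hneu v hv)
    have h2 := hno1 v hv
    omega
  have hsum := qsum_singleton c hinv hfix u X hcode hcov
  have hcardF : (X.toFinite).toFinset.card = 5 := by
    rw [← h5]
    exact (Set.ncard_eq_toFinset_card X (X.toFinite)).symm
  have hmemF : ∀ v, v ∈ (X.toFinite).toFinset ↔ v ∈ X := fun v => (X.toFinite).mem_toFinset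
  have hvals : ∀ v ∈ (X.toFinite).toFinset, qm c u v = 4⁻¹ ∨ qm c u v ≤ 8⁻¹ := by
    intro v hv
    have hvX := (hmemF v).1 hv
    have hk := hk2 v hvX
    rcases (by omega : kdiff u v = 2 ∨ 3 ≤ kdiff u v) with h | h
    · left
      rw [qm_eq_pow c (hcompat v hvX), h]
      norm_num
    · right
      have := qm_le_of_le c h
      calc qm c u v ≤ (2 : ℚ)⁻¹ ^ 3 := this
        _ = 8⁻¹ := by norm_num
  have hpos : ∀ v ∈ (X.toFinite).toFinset, 0 < qm c u v := by
    intro v hv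
    exact qm_pos c (hcompat v ((hmemF v).1 hv))
  obtain ⟨hfilt, hall⟩ := type5_aux _ (qm c u) hcardF hsum hpos hvals
  have hkval : ∀ v ∈ X, (qm c u v = 4⁻¹ ↔ kdiff u v = 2) ∧ (qm c u v = 8⁻¹ → kdiff u v = 3) := by
    intro v hv
    have hq := qm_eq_pow c (hcompat v hv)
    constructor
    · constructor
      · intro h
        by_contra hne
        have h3 : 3 ≤ kdiff u v := by
          have := hk2 v hv
          omega
        have := qm_le_of_le c h3
        rw [h] at this
        norm_num at this
      · intro h
        rw [hq, h]
        norm_num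
    · intro h
      by_contra hne
      rcases (by have := hk2 v hv; omega : kdiff u v = 2 ∨ 4 ≤ kdiff u v) with h2 | h2
      · rw [hq, h2] at h
        norm_num at h
      · have := qm_le_of_le c h2
        rw [h] at this
        norm_num at this
  constructor
  · intro v hv
    rcases hall v ((hmemF v).2 hv) with h | h
    · exact Or.inl ((hkval v hv).1.1 h)
    · exact Or.inr ((hkval v hv).2 h)
  · rw [← hfilt]
    congr 1
    apply Finset.filter_congr
    intro v hv
    exact ((hkval v ((hmemF v).1 hv)).1).symm

-- ### Section E: bridging with the set-theoretic model, and rigidity tools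

/-- Boolean point to set point. -/
def toSet (y : Fin d → S → Bool) : Fin d → Set S := fun i => {s | y i s = true}

theorem xor_bool {a b : Bool} : Xor' (a = true) (b = true) ↔ b = !a := by
  cases a <;> cases b <;> simp [Xor']

theorem setOf_mem_ESet (c : S → S) (g : S → Bool) :
    {s | g s = true} ∈ ESet c ↔ Flip c g := by
  unfold ESet Flip
  simp only [Set.mem_setOf_eq]
  exact forall_congr' (fun s => xor_bool)

theorem toSet_mem_realize (c : S → S) (v : Fin d → S) (y : Fin d → S → Bool) :
    toSet y ∈ Realize c v ↔ (∀ i, Flip c (y i) ∧ y i (v i) = true) := by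
  unfold Realize ELetter toSet
  simp only [Set.mem_setOf_eq]
  apply forall_congr'
  intro i
  rw [and_congr_left_iff]
  intro _
  exact setOf_mem_ESet c (y i)

theorem cover_transfer (c : S → S) {V : Set (Fin d → S)} {w : Fin d → S}
    (hcov : Realize c w ⊆ RealizeSet c V) :
    Region c (fun i => ({w i} : Finset S)) ⊆ ⋃ v ∈ V, gcube v := by
  intro y hy
  have h1 : toSet y ∈ Realize c w := (toSet_mem_realize c w y).2
    (fun i => ⟨(hy i).1, (hy i).2 (w i) (Finset.mem_singleton_self _)⟩)
  have h2 := hcov h1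
  unfold RealizeSet at h2
  rw [Set.mem_iUnion₂] at h2
  obtain ⟨v, hv, hmem⟩ := h2
  exact Set.mem_iUnion₂.2 ⟨v, hv, fun i => ((toSet_mem_realize c v y).1 hmem i).2⟩

theorem equiv_transfer (c : S → S) {V W : Set (Fin d → S)} (h : EquivCodes c V W)
    (y : Fin d → S → Bool) (hy : ∀ i, Flip c (y i)) :
    (∃ v ∈ V, y ∈ gcube v) ↔ (∃ w' ∈ W, y ∈ gcube w') := by
  have hgen : ∀ U : Set (Fin d → S), (toSet y ∈ RealizeSet c U ↔ ∃ v ∈ U, y ∈ gcube v) := by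
    intro U
    unfold RealizeSet
    rw [Set.mem_iUnion₂]
    constructor
    · rintro ⟨v, hv, hmem⟩
      exact ⟨v, hv, fun i => ((toSet_mem_realize c v y).1 hmem i).2⟩
    · rintro ⟨v, hv, hmem⟩
      exact ⟨v, hv, (toSet_mem_realize c v y).2 (fun i => ⟨hy i, hmem i⟩)⟩
  rw [← hgen V, ← hgen W, h]

theorem cnt_singleton_const (c : S → S) (hinv : Function.Involutive c)
    (hfix : ∀ s, c s ≠ s) (s t : S) : cnt c ({s} : Finset S) = cnt c ({t} : Finset S) := by
  have h1 : cnt c (insert s (∅ : Finset S)) * 2 = cnt c ∅ := by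
    apply cnt_insert c hinv
    · intro x hx
      simp only [insert_empty_eq, Finset.mem_singleton] at hx ⊢
      subst hx
      exact fun h => hfix x h
    · exact Finset.notMem_empty s
  have h2 : cnt c (insert t (∅ : Finset S)) * 2 = cnt c ∅ := by
    apply cnt_insert c hinv
    · intro x hx
      simp only [insert_empty_eq, Finset.mem_singleton] at hx ⊢
      subst hx
      exact fun h => hfix x h
    · exact Finset.notMem_empty t
  simp only [insert_empty_eq] at h1 h2
  omega

theorem code_card_eq (c : S → S) (hinv : Function.Involutive c) (hfix : ∀ s, c s ≠ s)
    {V W : Set (Fin d → S)} (wref : Fin d → S)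
    (hVd : ∀ u ∈ V, ∀ v ∈ V, u ≠ v → ∃ j, v j = c (u j))
    (hWd : ∀ u ∈ W, ∀ v ∈ W, u ≠ v → ∃ j, v j = c (u j))
    (hiff : ∀ y : Fin d → S → Bool, (∀ i, Flip c (y i)) →
      ((∃ v ∈ V, y ∈ gcube v) ↔ (∃ w' ∈ W, y ∈ gcube w'))) :
    V.ncard = W.ncard := by
  have hU : Region c (fun _ => (∅ : Finset S)) ∩ ⋃ v ∈ V, gcube v
      = Region c (fun _ => (∅ : Finset S)) ∩ ⋃ w' ∈ W, gcube w' := by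
    ext y
    simp only [Set.mem_inter_iff]
    constructor
    · rintro ⟨hr, hu⟩
      refine ⟨hr, ?_⟩
      obtain ⟨v, hv, hm⟩ := Set.mem_iUnion₂.1 hu
      obtain ⟨w', hw', hm'⟩ := (hiff y (fun i => (hr i).1)).1 ⟨v, hv, hm⟩
      exact Set.mem_iUnion₂.2 ⟨w', hw', hm'⟩
    · rintro ⟨hr, hu⟩
      refine ⟨hr, ?_⟩
      obtain ⟨w', hw', hm'⟩ := Set.mem_iUnion₂.1 hu
      obtain ⟨v, hv, hm⟩ := (hiff y (fun i => (hr i).1)).2 ⟨w', hw', hm'⟩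
      exact Set.mem_iUnion₂.2 ⟨v, hv, hm⟩
  have h1 := master c (fun _ => (∅ : Finset S)) V hVd
  have h2 := master c (fun _ => (∅ : Finset S)) W hWd
  rw [hU, h2] at h1
  have hterm : ∀ v : Fin d → S, (∏ i, cnt c (insert (v i) (∅ : Finset S)))
      = ∏ i, cnt c ({wref i} : Finset S) := by
    intro v
    apply Finset.prod_congr rfl
    intro i _
    rw [insert_empty_eq]
    exact cnt_singleton_const c hinv hfix (v i) (wref i)
  rw [Finset.sum_congr rfl (fun v _ => hterm v), Finset.sum_congr rfl (fun w _ => hterm w),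
    Finset.sum_const, Finset.sum_const, smul_eq_mul, smul_eq_mul] at h1
  have hK : 0 < ∏ i, cnt c ({wref i} : Finset S) := by
    apply Finset.prod_pos
    intro i _
    exact cnt_pos c hinv hfix (con_singleton c hfix (wref i))
  have hcards : (W.toFinite).toFinset.card = (V.toFinite).toFinset.card :=
    Nat.eq_of_mul_eq_mul_right hK h1
  rw [Set.ncard_eq_toFinset_card V (V.toFinite), Set.ncard_eq_toFinset_card W (W.toFinite)]
  exact hcards.symm

theorem cfg_restrict (c : S → S) (hinv : Function.Involutive c)
    {u : Fin d → S} {V : Set (Fin d → S)}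
    (hVd : ∀ u' ∈ V, ∀ v ∈ V, u' ≠ v → ∃ j, v j = c (u' j))
    (hVt : ∀ v ∈ V, ∀ v' ∈ V, ¬TwinPair c v v') (hu : u ∉ V)
    (hcov : Region c (fun i => ({u i} : Finset S)) ⊆ ⋃ v ∈ V, gcube v) :
    Cfg c u {v ∈ V | Compat c u v} := by
  refine ⟨?_, ?_, ?_, ?_, ?_⟩
  · intro v hv v' hv' hne
    exact hVd v hv.1 v' hv'.1 hne
  · intro v hv v' hv'
    exact hVt v hv.1 v' hv'.1
  · intro v hv
    exact hv.2
  · intro v hv heq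
    exact hu (heq ▸ hv.1)
  · intro y hy
    obtain ⟨v, hv, hmem⟩ := Set.mem_iUnion₂.1 (hcov hy)
    refine Set.mem_iUnion₂.2 ⟨v, ⟨hv, ?_⟩, hmem⟩
    intro j hj
    have h1 : y j (u j) = true := (hy j).2 (u j) (Finset.mem_singleton_self _)
    have h2 : y j (v j) = true := hmem j
    rw [hj] at h2
    rw [(hy j).1 (u j), h1] at h2
    simp at h2

theorem dset_comm (u v : Fin d → S) : dset u v = dset v u := by
  unfold dset
  apply Finset.filter_congr
  intro i _
  exact ⟨fun h => h.symm, fun h => h.symm⟩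

theorem row_type (c : S → S) (hinv : Function.Involutive c) (hfix : ∀ s, c s ≠ s)
    (v0 : Fin d → S) {Y : Set (Fin d → S)}
    (hYd : ∀ u' ∈ Y, ∀ v ∈ Y, u' ≠ v → ∃ j, v j = c (u' j))
    (hcov : Region c (fun i => ({v0 i} : Finset S)) ⊆ ⋃ y ∈ Y, gcube y)
    (h5 : (Y.toFinite).toFinset.card = 5)
    (hcompat : ∀ y ∈ Y, Compat c v0 y)
    (hk : ∀ y ∈ Y, kdiff v0 y = 2 ∨ kdiff v0 y = 3) :
    (((Y.toFinite).toFinset).filter (fun y => kdiff v0 y = 2)).card = 3 := by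
  classical
  have hmemF : ∀ y, y ∈ (Y.toFinite).toFinset ↔ y ∈ Y := fun y => (Y.toFinite).mem_toFinset
  have hsum := qsum_singleton c hinv hfix v0 Y hYd hcov
  have hvals : ∀ y ∈ (Y.toFinite).toFinset, qm c v0 y = 4⁻¹ ∨ qm c v0 y ≤ 8⁻¹ := by
    intro y hy
    have hyY := (hmemF y).1 hy
    rcases hk y hyY with h | h
    · left
      rw [qm_eq_pow c (hcompat y hyY), h]
      norm_num
    · right
      rw [qm_eq_pow c (hcompat y hyY), h]
      norm_num
  have hpos : ∀ y ∈ (Y.toFinite).toFinset, 0 < qm c v0 y := by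
    intro y hy
    exact qm_pos c (hcompat y ((hmemF y).1 hy))
  obtain ⟨hfilt, _⟩ := type5_aux _ (qm c v0) h5 hsum hpos hvals
  rw [← hfilt]
  congr 1
  apply Finset.filter_congr
  intro y hy
  have hyY := (hmemF y).1 hy
  have hq := qm_eq_pow c (hcompat y hyY)
  constructor
  · intro h
    rw [hq, h]
    norm_num
  · intro h
    rcases hk y hyY with h2 | h2
    · exact h2
    · rw [hq, h2] at h
      norm_num at h

theorem conf_not_single (c : S → S) (hinv : Function.Involutive c) (hfix : ∀ s, c s ≠ s)
    {P : Set (Fin d → S)} {q : Fin d → S}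
    (hPd : ∀ u' ∈ P, ∀ v ∈ P, u' ≠ v → ∃ j, v j = c (u' j))
    (hcov : Region c (fun i => ({q i} : Finset S)) ⊆ ⋃ p ∈ P, gcube p)
    {p0 : Fin d → S} (hp0 : p0 ∈ P) {j : Fin d}
    (hall : ∀ p ∈ P, p ≠ p0 → p j = c (p0 j))
    (hz1 : p0 j ≠ q j) (hz2 : p0 j ≠ c (q j))
    (hub : qm c q p0 ≤ 4⁻¹) : False := by
  classical
  have hbal := balance c hinv hfix q P hPd hcov j (p0 j) hz1 hz2
  have hsum := qsum_singleton c hinv hfix q P hPd hcov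
  have hmemF : ∀ p, p ∈ (P.toFinite).toFinset ↔ p ∈ P := fun p => (P.toFinite).mem_toFinset
  have hp0F : p0 ∈ (P.toFinite).toFinset := (hmemF p0).2 hp0
  have hA : ((P.toFinite).toFinset).filter (fun p => p j = p0 j) = {p0} := by
    ext p
    simp only [Finset.mem_filter, Finset.mem_singleton]
    constructor
    · rintro ⟨hp, heq⟩
      by_contra hne
      have := hall p ((hmemF p).1 hp) hne
      rw [this] at heq
      exact hfix (p0 j) heq
    · rintro rfl
      exact ⟨hp0F, rfl⟩
  have hB : ((P.toFinite).toFinset).filter (fun p => p j = c (p0 j))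
      = ((P.toFinite).toFinset).erase p0 := by
    ext p
    simp only [Finset.mem_filter, Finset.mem_erase]
    constructor
    · rintro ⟨hp, heq⟩
      refine ⟨?_, hp⟩
      rintro rfl
      exact hfix (p j) heq.symm
    · rintro ⟨hne, hp⟩
      exact ⟨hp, hall p ((hmemF p).1 hp) hne⟩
  rw [hA, hB, Finset.sum_singleton] at hbal
  have herase := Finset.add_sum_erase _ (qm c q) hp0F
  rw [hsum] at herase
  have : qm c q p0 = 1 - qm c q p0 := by linarith
  linarith

theorem rigidity_core (c : S → S) (hinv : Function.Involutive c) (hfix : ∀ s, c s ≠ s)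
    {V W : Set (Fin d → S)}
    (hVd : ∀ u' ∈ V, ∀ v ∈ V, u' ≠ v → ∃ j, v j = c (u' j))
    (hVt : ∀ v ∈ V, ∀ v' ∈ V, ¬TwinPair c v v')
    (hWd : ∀ u' ∈ W, ∀ v ∈ W, u' ≠ v → ∃ j, v j = c (u' j))
    (hV5 : V.ncard = 5) (hW5 : (W.toFinite).toFinset.card = 5)
    (hcovV : ∀ w0 ∈ W, Region c (fun i => ({w0 i} : Finset S)) ⊆ ⋃ v ∈ V, gcube v)
    (hcovW : ∀ v ∈ V, Region c (fun i => ({v i} : Finset S)) ⊆ ⋃ w' ∈ W, gcube w')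
    (hWnoV : ∀ w0 ∈ W, w0 ∉ V) : False := by
  classical
  have hVfin5 : (V.toFinite).toFinset.card = 5 := by
    rw [← hV5]
    exact (Set.ncard_eq_toFinset_card V (V.toFinite)).symm
  have hmemV : ∀ v, v ∈ (V.toFinite).toFinset ↔ v ∈ V := fun v => (V.toFinite).mem_toFinset
  have hmemW : ∀ v, v ∈ (W.toFinite).toFinset ↔ v ∈ W := fun v => (W.toFinite).mem_toFinset
  -- full column configurations
  have hcol : ∀ w0 ∈ W, Cfg c w0 V ∧ (∀ v ∈ V, Compat c w0 v) := by
    intro w0 hw0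
    have h1 : Cfg c w0 {v ∈ V | Compat c w0 v} :=
      cfg_restrict c hinv hVd hVt (hWnoV w0 hw0) (hcovV w0 hw0)
    have h2 : 5 ≤ {v ∈ V | Compat c w0 v}.ncard := cfg_ge5 c hinv hfix _ w0 _ h1 rfl
    have heq : {v ∈ V | Compat c w0 v} = V :=
      Set.eq_of_subset_of_ncard_le (Set.sep_subset _ _) (by rw [hV5]; exact h2)
        (Set.toFinite V)
    rw [heq] at h1
    refine ⟨h1, ?_⟩
    intro v hv
    rw [← heq] at hv
    exact hv.2
  have hcolty : ∀ w0 ∈ W, (∀ v ∈ V, kdiff w0 v = 2 ∨ kdiff w0 v = 3) ∧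
      (((V.toFinite).toFinset).filter (fun v => kdiff w0 v = 2)).card = 3 :=
    fun w0 hw0 => five_type c hinv hfix (hcol w0 hw0).1 hV5
  have hrowcompat : ∀ v ∈ V, ∀ w0 ∈ W, Compat c v w0 :=
    fun v hv w0 hw0 => (compat_comm c hinv w0 v).1 ((hcol w0 hw0).2 v hv)
  have hrowk : ∀ v ∈ V, ∀ w0 ∈ W, kdiff v w0 = 2 ∨ kdiff v w0 = 3 := by
    intro v hv w0 hw0
    rw [kdiff_comm]
    exact (hcolty w0 hw0).1 v hv
  have hrowty : ∀ v ∈ V, (((W.toFinite).toFinset).filter (fun w0 => kdiff v w0 = 2)).card = 3 :=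
    fun v hv => row_type c hinv hfix v hWd (hcovW v hv) hW5
      (fun w0 hw0 => hrowcompat v hv w0 hw0) (fun w0 hw0 => hrowk v hv w0 hw0)
  -- difference containment facts
  have hVconf_diff : ∀ v ∈ V, ∀ v' ∈ V, ∀ j : Fin d, v' j = c (v j) →
      ∀ w0 ∈ W, w0 j ≠ v j ∧ w0 j ≠ v' j := by
    intro v hv v' hv' j hj w0 hw0
    constructor
    · intro heq
      exact (hcol w0 hw0).2 v' hv' j (by rw [hj, ← heq])
    · intro heq
      apply (hcol w0 hw0).2 v hv j
      rw [heq, hj, hinv]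
  have hWconf_diff : ∀ w1 ∈ W, ∀ w2 ∈ W, ∀ j : Fin d, w2 j = c (w1 j) →
      ∀ v ∈ V, v j ≠ w1 j ∧ v j ≠ w2 j := by
    intro w1 hw1 w2 hw2 j hj v hv
    constructor
    · intro heq
      apply (hcol w2 hw2).2 v hv j
      rw [heq, ← hinv (w1 j), ← hj]
    · intro heq
      apply (hcol w1 hw1).2 v hv j
      rw [heq]
      exact hj
  -- qm bounds
  have hub_col : ∀ w0 ∈ W, ∀ v ∈ V, qm c w0 v ≤ 4⁻¹ := by
    intro w0 hw0 v hv
    have h1 : 2 ≤ kdiff w0 v := by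
      rcases (hcolty w0 hw0).1 v hv with h | h <;> omega
    have h2 := qm_le_of_le c h1
    have h3 : ((2 : ℚ)⁻¹) ^ 2 = 4⁻¹ := by norm_num
    linarith [h3 ▸ h2]
  have hub_row : ∀ v ∈ V, ∀ w0 ∈ W, qm c v w0 ≤ 4⁻¹ := by
    intro v hv w0 hw0
    rw [qm_comm c hinv]
    exact hub_col w0 hw0 v hv
  -- choose v0
  have hVne : ∃ v0, v0 ∈ (V.toFinite).toFinset := by
    apply Finset.card_pos.1
    rw [hVfin5]; norm_num
  obtain ⟨v0, hv0F⟩ := hVne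
  have hv0 : v0 ∈ V := (hmemV v0).1 hv0F
  have hWne : ∃ w00, w00 ∈ (W.toFinite).toFinset := by
    apply Finset.card_pos.1
    rw [hW5]; norm_num
  obtain ⟨w00, hw00F⟩ := hWne
  have hw00 : w00 ∈ W := (hmemW w00).1 hw00F
  -- the conflict set of v0 within V
  set J : Finset (Fin d) :=
    Finset.univ.filter (fun j => ∃ v' ∈ V, v' ≠ v0 ∧ v' j = c (v0 j)) with hJdef
  have hmemJ : ∀ j : Fin d, j ∈ J ↔ ∃ v' ∈ V, v' ≠ v0 ∧ v' j = c (v0 j) := by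
    intro j
    rw [hJdef]
    simp
  have hJsub : ∀ w0 ∈ W, J ⊆ dset w0 v0 := by
    intro w0 hw0 j hj
    obtain ⟨v', hv', hne, hconf⟩ := (hmemJ j).1 hj
    exact mem_dset.2 (fun h =>
      (hVconf_diff v0 hv0 v' hv' j hconf w0 hw0).1 h.symm)
  -- J has exactly two elements
  have hJle : J.card ≤ 2 := by
    have h3 := hrowty v0 hv0
    have hne : ∃ q, q ∈ ((W.toFinite).toFinset).filter (fun w0 => kdiff v0 w0 = 2) := by
      apply Finset.card_pos.1
      rw [h3]; norm_num
    obtain ⟨q, hq⟩ := hne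
    have hqW : q ∈ W := (hmemW q).1 (Finset.mem_filter.1 hq).1
    have hq2 : kdiff v0 q = 2 := (Finset.mem_filter.1 hq).2
    have := Finset.card_le_card (hJsub q hqW)
    rw [← kdiff_eq_card_dset, kdiff_comm, hq2] at this
    exact this
  have hJge : 1 ≤ J.card := by
    obtain ⟨v1, hv1F, hv1ne⟩ := Finset.exists_mem_ne (by rw [hVfin5]; norm_num) v0
    have hv1 : v1 ∈ V := (hmemV v1).1 hv1F
    obtain ⟨j, hj⟩ := hVd v0 hv0 v1 hv1 (Ne.symm hv1ne)
    have : j ∈ J := (hmemJ j).2 ⟨v1, hv1, hv1ne, hj⟩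
    exact Finset.card_pos.2 ⟨j, this⟩
  have hJne1 : J.card ≠ 1 := by
    intro h1
    obtain ⟨j, hj⟩ := Finset.card_eq_one.1 h1
    have hjJ : j ∈ J := by rw [hj]; exact Finset.mem_singleton_self j
    obtain ⟨v', hv', hne', hconf'⟩ := (hmemJ j).1 hjJ
    have hall : ∀ p ∈ V, p ≠ v0 → p j = c (v0 j) := by
      intro p hp hpne
      obtain ⟨j', hj'⟩ := hVd v0 hv0 p hp (Ne.symm hpne)
      have : j' ∈ J := (hmemJ j').2 ⟨p, hp, hpne, hj'⟩
      rw [hj, Finset.mem_singleton] at this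
      rw [← this]
      exact hj'
    exact conf_not_single c hinv hfix hVd (hcovV w00 hw00) hv0 hall
      (fun h => (hVconf_diff v0 hv0 v' hv' j hconf' w00 hw00).1 h.symm)
      ((hcol w00 hw00).2 v0 hv0 j) (hub_col w00 hw00 v0 hv0)
  have hJ2 : J.card = 2 := by omega
  -- row 2-diff words have difference set exactly J
  have hdq : ∀ q ∈ W, kdiff v0 q = 2 → dset q v0 = J := by
    intro q hqW hq2
    refine (Finset.eq_of_subset_of_card_le (hJsub q hqW) ?_).symm
    rw [← kdiff_eq_card_dset, kdiff_comm, hq2, hJ2]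
  -- conflict set of q within W equals J, for q a row-2 word
  have hCSWJ : ∀ q ∈ W, kdiff v0 q = 2 →
      (Finset.univ.filter (fun j => ∃ w'' ∈ W, w'' ≠ q ∧ w'' j = c (q j))) = J := by
    intro q hqW hq2
    set K : Finset (Fin d) :=
      Finset.univ.filter (fun j => ∃ w'' ∈ W, w'' ≠ q ∧ w'' j = c (q j)) with hKdef
    have hmemK : ∀ j : Fin d, j ∈ K ↔ ∃ w'' ∈ W, w'' ≠ q ∧ w'' j = c (q j) := by
      intro j
      rw [hKdef]
      simp
    have hKsub : ∀ v ∈ V, K ⊆ dset v q := by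
      intro v hv j hj
      obtain ⟨w'', hw'', hne, hconf⟩ := (hmemK j).1 hj
      exact mem_dset.2 (fun h =>
        (hWconf_diff q hqW w'' hw'' j hconf v hv).1 h.symm)
    have hKle : K.card ≤ 2 := by
      have h3 := (hcolty q hqW).2
      have hne : ∃ v, v ∈ ((V.toFinite).toFinset).filter (fun v => kdiff q v = 2) := by
        apply Finset.card_pos.1
        rw [h3]; norm_num
      obtain ⟨v, hv⟩ := hne
      have hvV : v ∈ V := (hmemV v).1 (Finset.mem_filter.1 hv).1
      have hv2 : kdiff q v = 2 := (Finset.mem_filter.1 hv).2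
      have := Finset.card_le_card (hKsub v hvV)
      rw [← kdiff_eq_card_dset, kdiff_comm, hv2] at this
      exact this
    have hKge : 1 ≤ K.card := by
      obtain ⟨w1, hw1F, hw1ne⟩ := Finset.exists_mem_ne (by rw [hW5]; norm_num) q
      have hw1 : w1 ∈ W := (hmemW w1).1 hw1F
      obtain ⟨j, hj⟩ := hWd q hqW w1 hw1 (Ne.symm hw1ne)
      have : j ∈ K := (hmemK j).2 ⟨w1, hw1, hw1ne, hj⟩
      exact Finset.card_pos.2 ⟨j, this⟩
    have hKne1 : K.card ≠ 1 := by
      intro h1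
      obtain ⟨j, hj⟩ := Finset.card_eq_one.1 h1
      have hjK : j ∈ K := by rw [hj]; exact Finset.mem_singleton_self j
      obtain ⟨w', hw', hne', hconf'⟩ := (hmemK j).1 hjK
      have hall : ∀ p ∈ W, p ≠ q → p j = c (q j) := by
        intro p hp hpne
        obtain ⟨j', hj'⟩ := hWd q hqW p hp (Ne.symm hpne)
        have : j' ∈ K := (hmemK j').2 ⟨p, hp, hpne, hj'⟩
        rw [hj, Finset.mem_singleton] at this
        rw [← this]
        exact hj'
      exact conf_not_single c hinv hfix hWd (hcovW v0 hv0) hqW hall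
        (fun h => (hWconf_diff q hqW w' hw' j hconf' v0 hv0).1 h.symm)
        ((hrowcompat v0 hv0 q hqW) j) (hub_row v0 hv0 q hqW)
    have hK2 : K.card = 2 := by omega
    have hKsubJ : K ⊆ J := by
      have h1 : K ⊆ dset v0 q := hKsub v0 hv0
      rw [dset_comm, hdq q hqW hq2] at h1
      exact h1
    exact Finset.eq_of_subset_of_card_le hKsubJ (by rw [hK2, hJ2])
  -- the three column-2 words of a row-2 word q form exactly V2
  have hV2 : ∀ q ∈ W, kdiff v0 q = 2 →
      ((V.toFinite).toFinset).filter (fun v => kdiff q v = 2)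
        = ((V.toFinite).toFinset).filter (fun v => ∀ i, i ∉ J → v i = v0 i) := by
    intro q hqW hq2
    have hKJ := hCSWJ q hqW hq2
    have hqoff : ∀ i, i ∉ J → q i = v0 i := by
      intro i hi
      have h0 : i ∉ dset q v0 := by rw [hdq q hqW hq2]; exact hi
      have h1 : v0 i = q i := eq_off_dset h0
      exact h1.symm
    apply Finset.filter_congr
    intro v hvF
    have hvV : v ∈ V := (hmemV v).1 hvF
    constructor
    · intro h2
      -- difference set of v from q is exactly J
      have hsub : (Finset.univ.filter (fun j => ∃ w'' ∈ W, w'' ≠ q ∧ w'' j = c (q j)))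
          ⊆ dset v q := by
        intro j hj
        simp only [Finset.mem_filter, Finset.mem_univ, true_and] at hj
        obtain ⟨w'', hw'', hne, hconf⟩ := hj
        exact mem_dset.2 (fun h =>
          (hWconf_diff q hqW w'' hw'' j hconf v hvV).1 h.symm)
      rw [hKJ] at hsub
      have heq : dset v q = J := by
        refine (Finset.eq_of_subset_of_card_le hsub ?_).symm
        rw [← kdiff_eq_card_dset, kdiff_comm, h2, hJ2]
      intro i hi
      have h3 : i ∉ dset v q := by rw [heq]; exact hi
      have h4 : q i = v i := eq_off_dset h3
      rw [← h4, hqoff i hi]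
    · intro hoff
      have hsub : dset q v ⊆ J := by
        intro i hi
        by_contra hiJ
        have h1 : v i = v0 i := hoff i hiJ
        have h2 : q i = v0 i := hqoff i hiJ
        exact (mem_dset.1 hi) (h1.trans h2.symm)
      have hle : kdiff q v ≤ 2 := by
        rw [kdiff_eq_card_dset]
        calc (dset q v).card ≤ J.card := Finset.card_le_card hsub
          _ = 2 := hJ2
      rcases (hcolty q hqW).1 v hvV with h | h
      · exact h
      · omega
  -- extract v3 outside V2
  have hv0V2 : v0 ∈ ((V.toFinite).toFinset).filter (fun v => ∀ i, i ∉ J → v i = v0 i) :=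
    Finset.mem_filter.2 ⟨hv0F, fun i _ => rfl⟩
  have hrow3 := hrowty v0 hv0
  have hQne : ∃ q0, q0 ∈ ((W.toFinite).toFinset).filter (fun w0 => kdiff v0 w0 = 2) := by
    apply Finset.card_pos.1
    rw [hrow3]; norm_num
  obtain ⟨q0, hq0⟩ := hQne
  have hq0W : q0 ∈ W := (hmemW q0).1 (Finset.mem_filter.1 hq0).1
  have hq02 : kdiff v0 q0 = 2 := (Finset.mem_filter.1 hq0).2
  have hV2card : (((V.toFinite).toFinset).filter (fun v => ∀ i, i ∉ J → v i = v0 i)).card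
      = 3 := by
    rw [← hV2 q0 hq0W hq02]
    exact (hcolty q0 hq0W).2
  have hv3ex : ∃ v3, v3 ∈ (V.toFinite).toFinset \
      (((V.toFinite).toFinset).filter (fun v => ∀ i, i ∉ J → v i = v0 i)) := by
    apply Finset.card_pos.1
    rw [Finset.card_sdiff_of_subset (Finset.filter_subset _ _), hVfin5, hV2card]
    norm_num
  obtain ⟨v3, hv3⟩ := hv3ex
  have hv3F : v3 ∈ (V.toFinite).toFinset := (Finset.mem_sdiff.1 hv3).1
  have hv3V : v3 ∈ V := (hmemV v3).1 hv3F
  have hv3not : v3 ∉ ((V.toFinite).toFinset).filter (fun v => ∀ i, i ∉ J → v i = v0 i) :=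
    (Finset.mem_sdiff.1 hv3).2
  -- every row-2 word q of v0 has kdiff q v3 = 3
  have hq3 : ∀ q ∈ (W.toFinite).toFinset, kdiff v0 q = 2 → kdiff q v3 = 3 := by
    intro q hqF hq2
    have hqW : q ∈ W := (hmemW q).1 hqF
    have hnotin : v3 ∉ ((V.toFinite).toFinset).filter (fun v => kdiff q v = 2) := by
      rw [hV2 q hqW hq2]
      exact hv3not
    rcases (hcolty q hqW).1 v3 hv3V with h | h
    · exact absurd (Finset.mem_filter.2 ⟨hv3F, h⟩) hnotin
    · exact h
  -- final contradiction with the row sum of v3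
  have hsumrow := qsum_singleton c hinv hfix v3 W hWd (hcovW v3 hv3V)
  have hsplit := Finset.sum_sdiff
    (Finset.filter_subset (fun w0 => kdiff v0 w0 = 2) ((W.toFinite).toFinset))
    (f := qm c v3)
  have hsum8 : ∑ q ∈ ((W.toFinite).toFinset).filter (fun w0 => kdiff v0 w0 = 2),
      qm c v3 q = 3 * 8⁻¹ := by
    have hterm : ∀ q ∈ ((W.toFinite).toFinset).filter (fun w0 => kdiff v0 w0 = 2),
        qm c v3 q = 8⁻¹ := by
      intro q hq
      have hqF := (Finset.mem_filter.1 hq).1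
      have hq2 := (Finset.mem_filter.1 hq).2
      have hqW : q ∈ W := (hmemW q).1 hqF
      rw [qm_comm c hinv, qm_eq_pow c ((hcol q hqW).2 v3 hv3V), hq3 q hqF hq2]
      norm_num
    rw [Finset.sum_congr rfl hterm, Finset.sum_const, hrow3, nsmul_eq_mul]
    norm_num
  have hsumrest : ∑ q ∈ (W.toFinite).toFinset \
      ((W.toFinite).toFinset).filter (fun w0 => kdiff v0 w0 = 2), qm c v3 q ≤ 2 * 4⁻¹ := by
    have hcardrest : ((W.toFinite).toFinset \
        ((W.toFinite).toFinset).filter (fun w0 => kdiff v0 w0 = 2)).card = 2 := by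
      rw [Finset.card_sdiff_of_subset (Finset.filter_subset _ _), hW5, hrow3]
    have := Finset.sum_le_card_nsmul ((W.toFinite).toFinset \
        ((W.toFinite).toFinset).filter (fun w0 => kdiff v0 w0 = 2)) (qm c v3) (4⁻¹ : ℚ)
      (fun w0 hw0 => hub_row v3 hv3V w0 ((hmemW w0).1 (Finset.mem_sdiff.1 hw0).1))
    rw [hcardrest, nsmul_eq_mul] at this
    exact_mod_cast this
  rw [← hsplit, hsum8] at hsumrow
  have : (1 : ℚ) ≤ 2 * 4⁻¹ + 3 * 8⁻¹ := by
    rw [← hsumrow]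
    have h0 : ∑ q ∈ (W.toFinite).toFinset \
        ((W.toFinite).toFinset).filter (fun w0 => kdiff v0 w0 = 2), qm c v3 q ≤ 2 * 4⁻¹ :=
      hsumrest
    linarith
  norm_num at this

end
end PolyboxAux

open PolyboxAux in
theorem covered_word_card_ge_five_and_rigid {d : ℕ} [Fintype S] (c : S → S)
    (hinv : Function.Involutive c) (hfix : ∀ s, c s ≠ s)
    (V : Set (Fin d → S)) (hV : PolyboxCode c V) (hVt : NoTwinPair c V)
    (w : Fin d → S) (hwV : w ∉ V)
    (hcov : Realize c w ⊆ RealizeSet c V) :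
    5 ≤ V.ncard ∧
      (V.ncard = 5 →
        ∀ W : Set (Fin d → S), PolyboxCode c W → EquivCodes c V W → W = V) := by
  classical
  have hVd : ∀ u' ∈ V, ∀ v ∈ V, u' ≠ v → ∃ j, v j = c (u' j) := fun u' hu' v hv hne =>
    hV u' hu' v hv hne
  have hVtw : ∀ v ∈ V, ∀ v' ∈ V, ¬TwinPair c v v' := hVt
  have hgcov : Region c (fun i => ({w i} : Finset S)) ⊆ ⋃ v ∈ V, gcube v :=
    cover_transfer c hcov
  have hCfg0 : Cfg c w {v ∈ V | Compat c w v} :=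
    cfg_restrict c hinv hVd hVtw hwV hgcov
  have hge5sub : 5 ≤ {v ∈ V | Compat c w v}.ncard :=
    cfg_ge5 c hinv hfix _ w _ hCfg0 rfl
  have hge5 : 5 ≤ V.ncard :=
    le_trans hge5sub (Set.ncard_le_ncard (Set.sep_subset _ _) (Set.toFinite V))
  refine ⟨hge5, ?_⟩
  intro h5 W hW hEq
  by_contra hneWV
  have hWd : ∀ u' ∈ W, ∀ v ∈ W, u' ≠ v → ∃ j, v j = c (u' j) := fun u' hu' v hv hne =>
    hW u' hu' v hv hne
  have hiff : ∀ y : Fin d → S → Bool, (∀ i, Flip c (y i)) →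
      ((∃ v ∈ V, y ∈ gcube v) ↔ (∃ w' ∈ W, y ∈ gcube w')) :=
    equiv_transfer c hEq
  have hW5 : W.ncard = 5 := by
    rw [← code_card_eq c hinv hfix w hVd hWd hiff]
    exact h5
  have hWfin5 : (W.toFinite).toFinset.card = 5 := by
    rw [← hW5]
    exact (Set.ncard_eq_toFinset_card W (W.toFinite)).symm
  have hWnotsub : ¬ W ⊆ V := by
    intro hsub
    exact hneWV (Set.eq_of_subset_of_ncard_le hsub (by rw [h5, hW5]) (Set.toFinite V))
  have hcovW : ∀ v0 ∈ V, Region c (fun i => ({v0 i} : Finset S)) ⊆ ⋃ w' ∈ W, gcube w' := by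
    intro v0 hv0 y hy
    have hflip : ∀ i, Flip c (y i) := fun i => (hy i).1
    have h1 : y ∈ gcube v0 := fun i => (hy i).2 (v0 i) (Finset.mem_singleton_self _)
    obtain ⟨w', hw', hm⟩ := (hiff y hflip).1 ⟨v0, hv0, h1⟩
    exact Set.mem_iUnion₂.2 ⟨w', hw', hm⟩
  have hcovV : ∀ w0 ∈ W, Region c (fun i => ({w0 i} : Finset S)) ⊆ ⋃ v ∈ V, gcube v := by
    intro w0 hw0 y hy
    have hflip : ∀ i, Flip c (y i) := fun i => (hy i).1
    have h1 : y ∈ gcube w0 := fun i => (hy i).2 (w0 i) (Finset.mem_singleton_self _)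
    obtain ⟨v, hv, hm⟩ := (hiff y hflip).2 ⟨w0, hw0, h1⟩
    exact Set.mem_iUnion₂.2 ⟨v, hv, hm⟩
  -- every word of `W` outside `V` is compatible with all of `V`
  have hcolCfg : ∀ w0 ∈ W, w0 ∉ V → (∀ v ∈ V, Compat c w0 v) := by
    intro w0 hw0 hw0V
    have h1 : Cfg c w0 {v ∈ V | Compat c w0 v} :=
      cfg_restrict c hinv hVd hVtw hw0V (hcovV w0 hw0)
    have h2 : 5 ≤ {v ∈ V | Compat c w0 v}.ncard := cfg_ge5 c hinv hfix _ w0 _ h1 rfl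
    have heq : {v ∈ V | Compat c w0 v} = V :=
      Set.eq_of_subset_of_ncard_le (Set.sep_subset _ _) (by rw [h5]; exact h2)
        (Set.toFinite V)
    intro v hv
    rw [← heq] at hv
    exact hv.2
  obtain ⟨w0', hw0'W, hw0'V⟩ := Set.not_subset.1 hWnotsub
  have hWnoV : ∀ w0 ∈ W, w0 ∉ V := by
    intro w0 hw0 hw0V
    have hcompat := hcolCfg w0' hw0'W hw0'V w0 hw0V
    have hne : w0' ≠ w0 := fun h => hw0'V (h ▸ hw0V)
    obtain ⟨j, hj⟩ := hW w0' hw0'W w0 hw0 hne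
    exact hcompat j hj
  exact rigidity_core c hinv hfix hVd hVtw hWd h5 hWfin5 hcovV hcovW hWnoV
end

section
/- Let S be a finite alphabet with a complementation, let d ≥ 2, and let V ⊆ (*S)^d be a partition code with exactly 3 words. Then there exist distinct indices i_1, i_2 ∈ {1,…,d} and letters l_1, l_2 ∈ S such that V = {v^1, v^2, v^3}, where v^1_{i_1} = l_1, v^2_{i_1} = v^3_{i_1} = (l_1)', v^2_{i_2} = l_2, v^3_{i_2} = (l_2)', and all remaining coordinates of v^1, v^2, v^3 (including v^1_{i_2}) are equal to *. -/
variable {S : Type}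

/-- Words over `*S = S ∪ {*}` are modelled as `Fin d → Option S`, with `none = *`.
Two words are dichotomous: at some position one carries a letter `s ≠ *`
and the other its complement. -/
def DichoStar {d : ℕ} (c : S → S) (u v : Fin d → Option S) : Prop :=
  ∃ j, ∃ s, u j = some s ∧ v j = some (c s)

/-- Two words over `*S` form a twin pair. -/
def TwinPairStar {d : ℕ} (c : S → S) (u v : Fin d → Option S) : Prop :=
  ∃ j, (∃ s, u j = some s ∧ v j = some (c s)) ∧ ∀ i, i ≠ j → v i = u i

/-- A polybox code over `*S`: a set of pairwise dichotomous words. -/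
def PolyboxCodeStar {d : ℕ} (c : S → S) (V : Set (Fin d → Option S)) : Prop :=
  ∀ u ∈ V, ∀ v ∈ V, u ≠ v → DichoStar c u v

/-- The code contains no twin pair. -/
def NoTwinPairStar {d : ℕ} (c : S → S) (V : Set (Fin d → Option S)) : Prop :=
  ∀ u ∈ V, ∀ v ∈ V, ¬ TwinPairStar c u v

/-- `Es` for `s ∈ *S`; `E* = ES`. -/
def ELetterStar (c : S → S) : Option S → Set (Set S)
  | none => ESet c
  | some s => {B | B ∈ ESet c ∧ s ∈ B}

/-- The equicomplementary realization `v̌ ⊆ (ES)^d` of a word over `*S`. -/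
def RealizeStar {d : ℕ} (c : S → S) (v : Fin d → Option S) :
    Set (Fin d → Set S) :=
  {x | ∀ i, x i ∈ ELetterStar c (v i)}

/-- The union `⋃_{v ∈ V} v̌`. -/
def RealizeSetStar {d : ℕ} (c : S → S) (V : Set (Fin d → Option S)) :
    Set (Fin d → Set S) :=
  ⋃ v ∈ V, RealizeStar c v

/-- Two codes are equivalent if their realizations coincide. -/
def EquivCodesStar {d : ℕ} (c : S → S) (V W : Set (Fin d → Option S)) : Prop :=
  RealizeSetStar c V = RealizeSetStar c W

/-- A partition code: a polybox code whose realization is the whole box `(ES)^d`. -/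
def PartitionCodeStar {d : ℕ} (c : S → S) (U : Set (Fin d → Option S)) : Prop :=
  PolyboxCodeStar c U ∧ RealizeSetStar c U = {x | ∀ i, x i ∈ ESet c}

lemma ESet_nonempty [Fintype S] (c : S → S) (hinv : Function.Involutive c)
    (hfix : ∀ s, c s ≠ s) : (ESet c).Nonempty := by
  classical
  set f : S → ℕ := fun s => (Fintype.equivFin S s : ℕ) with hf
  refine ⟨{s | f s < f (c s)}, fun s => ?_⟩
  have hne : f s ≠ f (c s) := by
    intro h
    exact hfix s ((Fintype.equivFin S).injective (Fin.val_injective h)).symm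
  simp only [ESet, Set.mem_setOf_eq, hinv s, Xor', xor_def]
  omega

lemma two_mul_ncard_Es [Fintype S] (c : S → S) (hinv : Function.Involutive c)
    (s : S) : (ELetterStar c (some s)).ncard * 2 = (ESet c).ncard := by
  classical
  set A : Set S := {s, c s} with hA
  have hmemA : ∀ t : S, t ∈ A ↔ c t ∈ A := by
    intro t
    simp only [hA, Set.mem_insert_iff, Set.mem_singleton_iff]
    constructor
    · rintro (rfl | rfl)
      · right; rfl
      · exact Or.inl (hinv s)
    · rintro (h | h)
      · right; rw [← h, hinv]
      · left; exact hinv.injective h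
  set φ : Set S → Set S := fun B => symmDiff B A with hφ
  have hφinv : Function.Involutive φ := fun B => symmDiff_symmDiff_cancel_right A B
  have hφE : ∀ B ∈ ESet c, φ B ∈ ESet c := by
    intro B hB t
    have h1 := hB t
    have h2 := hmemA t
    simp only [hφ, Set.mem_symmDiff] at *
    unfold Xor' Xor at *
    tauto
  have hsA : s ∈ A := by simp [hA]
  have hcsA : c s ∈ A := by simp [hA]
  have himg : φ '' (ELetterStar c (some s)) = ELetterStar c (some (c s)) := by
    ext B
    simp only [Set.mem_image, ELetterStar, Set.mem_setOf_eq]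
    constructor
    · rintro ⟨C, ⟨hCE, hsC⟩, rfl⟩
      refine ⟨hφE C hCE, ?_⟩
      have := hCE s
      simp only [hφ, Set.mem_symmDiff]
      unfold Xor' Xor at this
      tauto
    · rintro ⟨hBE, hcsB⟩
      refine ⟨φ B, ⟨hφE B hBE, ?_⟩, hφinv B⟩
      have := hBE s
      simp only [hφ, Set.mem_symmDiff]
      unfold Xor' Xor at this
      tauto
  have hunion : ESet c = ELetterStar c (some s) ∪ ELetterStar c (some (c s)) := by
    ext B
    simp only [Set.mem_union, ELetterStar, Set.mem_setOf_eq]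
    constructor
    · intro hB
      have := hB s
      unfold Xor' Xor at this
      tauto
    · rintro (⟨h, _⟩ | ⟨h, _⟩) <;> exact h
  have hdisj : Disjoint (ELetterStar c (some s)) (ELetterStar c (some (c s))) := by
    rw [Set.disjoint_left]
    rintro B ⟨hBE, hsB⟩ ⟨_, hcsB⟩
    have := hBE s
    unfold Xor' Xor at this
    tauto
  have hcardeq : (ELetterStar c (some (c s))).ncard = (ELetterStar c (some s)).ncard := by
    rw [← himg, Set.ncard_image_of_injective _ hφinv.injective]
  rw [hunion, Set.ncard_union_eq hdisj (Set.toFinite _) (Set.toFinite _), hcardeq]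
  omega

noncomputable def ksupp {d : ℕ} (v : Fin d → Option S) : ℕ :=
  (Finset.univ.filter (fun i => (v i).isSome)).card

lemma realize_disjoint {d : ℕ} (c : S → S) {u v : Fin d → Option S}
    (hD : DichoStar c u v) : Disjoint (RealizeStar c u) (RealizeStar c v) := by
  rw [Set.disjoint_left]
  rintro x hx hx'
  obtain ⟨j, s, hu, hv⟩ := hD
  have h1 := hx j
  have h2 := hx' j
  rw [hu] at h1
  rw [hv] at h2
  obtain ⟨hE, hs⟩ := h1
  obtain ⟨-, hcs⟩ := h2
  have := hE s
  unfold Xor' Xor at this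
  tauto

lemma ncard_realize [Fintype S] {d : ℕ} (c : S → S) (v : Fin d → Option S) :
    (RealizeStar c v).ncard = ∏ i, (ELetterStar c (v i)).ncard := by
  classical
  have h : RealizeStar c v = Set.pi Set.univ (fun i => ELetterStar c (v i)) := by
    ext x
    simp [RealizeStar, Set.mem_pi]
  rw [h, ← Nat.card_coe_set_eq, Nat.card_congr (Equiv.Set.univPi _), Nat.card_pi]
  exact Finset.prod_congr rfl (fun i _ => Nat.card_coe_set_eq _)

lemma ncard_realize_eq [Fintype S] {d : ℕ} (c : S → S) (v : Fin d → Option S)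
    {M N : ℕ} (hM : ∀ s : S, (ELetterStar c (some s)).ncard = M)
    (hN : (ESet c).ncard = N) :
    (RealizeStar c v).ncard = M ^ (ksupp v) * N ^ (d - ksupp v) := by
  classical
  rw [ncard_realize]
  rw [← Finset.prod_filter_mul_prod_filter_not Finset.univ (fun i => (v i).isSome)]
  have h1 : ∀ i ∈ Finset.univ.filter (fun i => (v i).isSome),
      (ELetterStar c (v i)).ncard = M := by
    intro i hi
    simp only [Finset.mem_filter] at hi
    obtain ⟨s, hs⟩ := Option.isSome_iff_exists.mp hi.2
    rw [hs, hM]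
  have h2 : ∀ i ∈ Finset.univ.filter (fun i => ¬ (v i).isSome),
      (ELetterStar c (v i)).ncard = N := by
    intro i hi
    simp only [Finset.mem_filter] at hi
    rw [Option.not_isSome_iff_eq_none.mp hi.2]
    exact hN
  rw [Finset.prod_congr rfl h1, Finset.prod_congr rfl h2, Finset.prod_const,
    Finset.prod_const]
  have := Finset.card_filter_add_card_filter_not
    (s := (Finset.univ : Finset (Fin d))) (p := fun i => (v i).isSome)
  simp only [Finset.card_univ, Fintype.card_fin] at this
  have hk : (Finset.univ.filter (fun i => ¬ (v i).isSome)).card = d - ksupp v := by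
    unfold ksupp; omega
  rw [hk]
  rfl

lemma ncard_box [Fintype S] {d : ℕ} (c : S → S) {N : ℕ} (hN : (ESet c).ncard = N) :
    ({x : Fin d → Set S | ∀ i, x i ∈ ESet c}).ncard = N ^ d := by
  classical
  have h : {x : Fin d → Set S | ∀ i, x i ∈ ESet c}
      = Set.pi Set.univ (fun _ : Fin d => ESet c) := by
    ext x
    simp [Set.mem_pi]
  rw [h, ← Nat.card_coe_set_eq, Nat.card_congr (Equiv.Set.univPi _), Nat.card_pi]
  have : ∀ i : Fin d, Nat.card (ESet c) = N := fun _ => by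
    rw [Nat.card_coe_set_eq, hN]
  rw [Finset.prod_congr rfl (fun i _ => this i), Finset.prod_const, Finset.card_univ,
    Fintype.card_fin]

lemma ksupp_pos {d : ℕ} {c : S → S} {u v : Fin d → Option S}
    (h : DichoStar c u v) : 1 ≤ ksupp u := by
  classical
  obtain ⟨j, s, hu, -⟩ := h
  refine Finset.card_pos.mpr ⟨j, ?_⟩
  simp [hu]

lemma ksupp_le {d : ℕ} (v : Fin d → Option S) : ksupp v ≤ d := by
  classical
  calc ksupp v ≤ (Finset.univ : Finset (Fin d)).card := Finset.card_filter_le _ _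
  _ = d := by simp

lemma supp_one {d : ℕ} {v : Fin d → Option S} (h : ksupp v = 1) :
    ∃ i l, v i = some l ∧ ∀ j, j ≠ i → v j = none := by
  classical
  obtain ⟨i, hi⟩ := Finset.card_eq_one.mp h
  have hmem : ∀ j : Fin d, (v j).isSome ↔ j = i := by
    intro j
    constructor
    · intro hj
      have : j ∈ Finset.univ.filter (fun i => (v i).isSome) := by simp [hj]
      rw [hi] at this
      simpa using this
    · rintro rfl
      have : j ∈ Finset.univ.filter (fun i => (v i).isSome) := by
        rw [hi]; simp
      simpa using (Finset.mem_filter.mp this).2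
  obtain ⟨l, hl⟩ := Option.isSome_iff_exists.mp ((hmem i).mpr rfl)
  refine ⟨i, l, hl, fun j hj => ?_⟩
  have := (hmem j).not.mpr hj  -- wrong direction? we need ¬isSome
  exact Option.not_isSome_iff_eq_none.mp (fun hs => hj ((hmem j).mp hs))

lemma supp_two {d : ℕ} {v : Fin d → Option S} (h : ksupp v = 2) {i₁ : Fin d}
    (h1 : (v i₁).isSome) :
    ∃ i₂ l₂, i₂ ≠ i₁ ∧ v i₂ = some l₂ ∧ ∀ j, j ≠ i₁ → j ≠ i₂ → v j = none := by
  classical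
  obtain ⟨x, y, hxy, hset⟩ := Finset.card_eq_two.mp h
  have hmem : ∀ j : Fin d, (v j).isSome ↔ (j = x ∨ j = y) := by
    intro j
    constructor
    · intro hj
      have : j ∈ Finset.univ.filter (fun i => (v i).isSome) := by simp [hj]
      rw [hset] at this
      simpa using this
    · intro hj
      have : j ∈ ({x, y} : Finset (Fin d)) := by simpa using hj
      rw [← hset] at this
      simpa using (Finset.mem_filter.mp this).2
  have hi₁ : i₁ = x ∨ i₁ = y := (hmem i₁).mp h1
  -- pick the other one
  rcases hi₁ with rfl | rfl
  · have hy : (v y).isSome := (hmem y).mpr (Or.inr rfl)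
    obtain ⟨l, hl⟩ := Option.isSome_iff_exists.mp hy
    exact ⟨y, l, hxy.symm, hl, fun j hj1 hj2 =>
      Option.not_isSome_iff_eq_none.mp (fun hs => by
        rcases (hmem j).mp hs with rfl | rfl
        · exact hj1 rfl
        · exact hj2 rfl)⟩
  · have hx : (v x).isSome := (hmem x).mpr (Or.inl rfl)
    obtain ⟨l, hl⟩ := Option.isSome_iff_exists.mp hx
    exact ⟨x, l, hxy, hl, fun j hj1 hj2 =>
      Option.not_isSome_iff_eq_none.mp (fun hs => by
        rcases (hmem j).mp hs with rfl | rfl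
        · exact hj2 rfl
        · exact hj1 rfl)⟩

lemma two_pow_pos' (n : ℕ) : 0 < 2 ^ n := Nat.pow_pos (by norm_num)

lemma two_pow_eq_two {e : ℕ} (h : (2:ℕ) ^ e = 2) : e = 1 := by
  rcases e with _ | _ | e
  · simp at h
  · rfl
  · exfalso
    have : 2 ^ 2 ≤ 2 ^ (e + 2) := Nat.pow_le_pow_right (by norm_num) (by omega)
    omega

lemma two_pow_ne_three {e : ℕ} : (2:ℕ) ^ e ≠ 3 := by
  rcases e with _ | _ | e
  · simp
  · simp
  · have : 2 ^ 2 ≤ 2 ^ (e + 2) := Nat.pow_le_pow_right (by norm_num) (by omega)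
    omega

lemma one_add_pow_eq_pow {b e : ℕ} (h : 1 + 2 ^ b = 2 ^ e) : b = 0 ∧ e = 1 := by
  rcases b with _ | b
  · simp only [pow_zero] at h
    exact ⟨rfl, two_pow_eq_two h.symm⟩
  · exfalso
    have he : e ≠ 0 := by
      intro he; rw [he] at h
      rw [pow_zero] at h
      have := two_pow_pos' (b+1); omega
    obtain ⟨e', rfl⟩ := Nat.exists_eq_succ_of_ne_zero he
    rw [pow_succ, pow_succ] at h
    omega

lemma sorted_pow_sum {A B C e : ℕ} (hAB : A ≤ B) (hBC : B ≤ C)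
    (h : 2 ^ A + 2 ^ B + 2 ^ C = 2 ^ e) :
    A = e - 2 ∧ B = e - 2 ∧ C = e - 1 ∧ 2 ≤ e := by
  obtain ⟨b, rfl⟩ := Nat.exists_eq_add_of_le hAB
  obtain ⟨c, rfl⟩ := Nat.exists_eq_add_of_le hBC
  have hAe : A ≤ e := by
    have h1 := two_pow_pos' (A + b)
    have h2 := two_pow_pos' (A + b + c)
    have : (2:ℕ) ^ A ≤ 2 ^ e := by omega
    exact (Nat.pow_le_pow_iff_right (by norm_num)).mp this
  obtain ⟨f, rfl⟩ := Nat.exists_eq_add_of_le hAe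
  simp only [pow_add] at h
  have hcancel : 1 + 2 ^ b + 2 ^ b * 2 ^ c = 2 ^ f := by
    have hpos := two_pow_pos' A
    have : 2 ^ A * (1 + 2 ^ b + 2 ^ b * 2 ^ c) = 2 ^ A * 2 ^ f := by ring_nf; ring_nf at h; linarith
    exact Nat.eq_of_mul_eq_mul_left hpos this
  -- show b = 0
  have hb : b = 0 := by
    by_contra hb
    obtain ⟨b', rfl⟩ := Nat.exists_eq_succ_of_ne_zero hb
    have hf : f ≠ 0 := by
      intro hf; rw [hf] at hcancel
      have h1 := two_pow_pos' (b' + 1)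
      have h2 := two_pow_pos' (b' + 1) 
      have h3 : 0 < 2 ^ (b' + 1) * 2 ^ c := Nat.mul_pos (two_pow_pos' _) (two_pow_pos' _)
      simp at hcancel; omega
    obtain ⟨f', rfl⟩ := Nat.exists_eq_succ_of_ne_zero hf
    rw [pow_succ, pow_succ] at hcancel
    have : 2 ^ b' * 2 * 2 ^ c = 2 * (2 ^ b' * 2 ^ c) := by ring
    rw [this] at hcancel
    omega
  subst hb
  simp only [pow_zero, one_mul] at hcancel
  -- 2 + 2 ^ c = 2 ^ f
  have hc : c ≠ 0 := by
    intro hc; rw [hc] at hcancel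
    exact two_pow_ne_three (e := f) (by omega)
  obtain ⟨c', rfl⟩ := Nat.exists_eq_succ_of_ne_zero hc
  have hf : f ≠ 0 := by
    intro hf; rw [hf] at hcancel
    have := two_pow_pos' (c' + 1); omega
  obtain ⟨f', rfl⟩ := Nat.exists_eq_succ_of_ne_zero hf
  rw [pow_succ, pow_succ] at hcancel
  have hcancel2 : 1 + 2 ^ c' = 2 ^ f' := by omega
  obtain ⟨hc', hf'⟩ := one_add_pow_eq_pow hcancel2
  subst hc' hf'
  omega

lemma pow_sum_three {x y z e : ℕ} (h : 2 ^ x + 2 ^ y + 2 ^ z = 2 ^ e) :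
    2 ≤ e ∧ ((x = e-1 ∧ y = e-2 ∧ z = e-2) ∨ (y = e-1 ∧ x = e-2 ∧ z = e-2) ∨
      (z = e-1 ∧ x = e-2 ∧ y = e-2)) := by
  rcases le_total x y with h1 | h1 <;> rcases le_total y z with h2 | h2 <;>
    rcases le_total x z with h3 | h3
  · obtain ⟨ha, hb, hc, he⟩ := sorted_pow_sum h1 h2 h
    exact ⟨he, Or.inr (Or.inr ⟨hc, ha, hb⟩)⟩
  · obtain ⟨ha, hb, hc, he⟩ := sorted_pow_sum h1 h2 h
    exact ⟨he, Or.inr (Or.inr ⟨hc, ha, hb⟩)⟩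
  · obtain ⟨ha, hb, hc, he⟩ := sorted_pow_sum h3 h2
      (show 2 ^ x + 2 ^ z + 2 ^ y = 2 ^ e by linarith)
    exact ⟨he, Or.inr (Or.inl ⟨hc, ha, hb⟩)⟩
  · obtain ⟨ha, hb, hc, he⟩ := sorted_pow_sum h3 h1
      (show 2 ^ z + 2 ^ x + 2 ^ y = 2 ^ e by linarith)
    exact ⟨he, Or.inr (Or.inl ⟨hc, hb, ha⟩)⟩
  · obtain ⟨ha, hb, hc, he⟩ := sorted_pow_sum h1 h3
      (show 2 ^ y + 2 ^ x + 2 ^ z = 2 ^ e by linarith)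
    exact ⟨he, Or.inr (Or.inr ⟨hc, hb, ha⟩)⟩
  · obtain ⟨ha, hb, hc, he⟩ := sorted_pow_sum h2 h3
      (show 2 ^ y + 2 ^ z + 2 ^ x = 2 ^ e by linarith)
    exact ⟨he, Or.inl ⟨hc, ha, hb⟩⟩
  · obtain ⟨ha, hb, hc, he⟩ := sorted_pow_sum h2 h1
      (show 2 ^ z + 2 ^ y + 2 ^ x = 2 ^ e by linarith)
    exact ⟨he, Or.inl ⟨hc, hb, ha⟩⟩
  · obtain ⟨ha, hb, hc, he⟩ := sorted_pow_sum h2 h1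
      (show 2 ^ z + 2 ^ y + 2 ^ x = 2 ^ e by linarith)
    exact ⟨he, Or.inl ⟨hc, hb, ha⟩⟩

lemma final_structure {d : ℕ} (c : S → S) (hinv : Function.Involutive c)
    (hfix : ∀ s, c s ≠ s) (a b e : Fin d → Option S)
    (hab : DichoStar c a b) (hae : DichoStar c a e) (hbe : DichoStar c b e)
    (hka : ksupp a = 1) (hkb : ksupp b = 2) (hke : ksupp e = 2) :
    ∃ (i₁ i₂ : Fin d), i₁ ≠ i₂ ∧ ∃ (l₁ l₂ : S),
      a i₁ = some l₁ ∧ b i₁ = some (c l₁) ∧ e i₁ = some (c l₁) ∧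
      a i₂ = none ∧ b i₂ = some l₂ ∧ e i₂ = some (c l₂) ∧
      ∀ j, j ≠ i₁ → j ≠ i₂ → a j = none ∧ b j = none ∧ e j = none := by
  obtain ⟨i₁, l₁, ha1, hao⟩ := supp_one hka
  -- b i₁ = some (c l₁)
  have hb1 : b i₁ = some (c l₁) := by
    obtain ⟨j, s, haj, hbj⟩ := hab
    have hji : j = i₁ := by
      by_contra hj
      rw [hao j hj] at haj
      exact Option.some_ne_none _ haj.symm
    subst hji
    rw [ha1] at haj
    injection haj with hs
    rw [hs]
    exact hbj
  have he1 : e i₁ = some (c l₁) := by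
    obtain ⟨j, s, haj, hej⟩ := hae
    have hji : j = i₁ := by
      by_contra hj
      rw [hao j hj] at haj
      exact Option.some_ne_none _ haj.symm
    subst hji
    rw [ha1] at haj
    injection haj with hs
    rw [hs]
    exact hej
  obtain ⟨i₂, l₂, hi21, hb2, hbo⟩ := supp_two hkb (i₁ := i₁) (by rw [hb1]; rfl)
  obtain ⟨i₃, l₃, hi31, he3, heo⟩ := supp_two hke (i₁ := i₁) (by rw [he1]; rfl)
  -- dichotomy between b and e happens at i₂
  obtain ⟨j, s, hbj, hej⟩ := hbe
  have hji : j = i₁ ∨ j = i₂ := by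
    by_contra hj
    push_neg at hj
    rw [hbo j hj.1 hj.2] at hbj
    exact Option.some_ne_none _ hbj.symm
  rcases hji with rfl | hj2
  · exfalso
    rw [hb1] at hbj
    injection hbj with hs
    rw [he1] at hej
    injection hej with hs'
    rw [← hs] at hs'
    rw [hinv] at hs'
    exact hfix l₁ hs'
  · -- j = j : s = l₂ and e j = some (c l₂)
    subst hj2
    rw [hb2] at hbj
    injection hbj with hs
    subst hs
    -- j is in the support of e, so j = i₃
    have hi23 : j = i₃ := by
      by_contra hne
      rw [heo j hi21 hne] at hej
      exact Option.some_ne_none _ hej.symm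
    subst hi23
    refine ⟨i₁, j, hi21.symm, l₁, l₂, ha1, hb1, he1, hao j hi21, hb2, hej,
      fun j' hx1 hx2 => ⟨hao j' hx1, hbo j' hx1 hx2, heo j' hx1 hx2⟩⟩

theorem partition_code_three_words {d : ℕ} [Fintype S] (c : S → S)
    (hinv : Function.Involutive c) (hfix : ∀ s, c s ≠ s) (hd : 2 ≤ d)
    (V : Set (Fin d → Option S)) (hV : PartitionCodeStar c V)
    (hcard : V.ncard = 3) :
    ∃ (i₁ i₂ : Fin d), i₁ ≠ i₂ ∧ ∃ (l₁ l₂ : S),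
      ∃ v₁ v₂ v₃ : Fin d → Option S,
        V = {v₁, v₂, v₃} ∧
        v₁ i₁ = some l₁ ∧ v₂ i₁ = some (c l₁) ∧ v₃ i₁ = some (c l₁) ∧
        v₁ i₂ = none ∧ v₂ i₂ = some l₂ ∧ v₃ i₂ = some (c l₂) ∧
        ∀ j, j ≠ i₁ → j ≠ i₂ → v₁ j = none ∧ v₂ j = none ∧ v₃ j = none := by
  classical
  obtain ⟨a, b, e, hab', hae', hbe', hVeq⟩ := Set.ncard_eq_three.mp hcard
  obtain ⟨hpoly, hcover⟩ := hV
  have haV : a ∈ V := by rw [hVeq]; simp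
  have hbV : b ∈ V := by rw [hVeq]; simp
  have heV : e ∈ V := by rw [hVeq]; simp
  have hDab := hpoly a haV b hbV hab'
  have hDae := hpoly a haV e heV hae'
  have hDbe := hpoly b hbV e heV hbe'
  have hDba := hpoly b hbV a haV (Ne.symm hab')
  have hDea := hpoly e heV a haV (Ne.symm hae')
  have hDeb := hpoly e heV b hbV (Ne.symm hbe')
  -- basic cardinalities
  obtain ⟨j₀, s₀, -, -⟩ := id hDab
  set N := (ESet c).ncard with hN
  have hNpos : 0 < N := (Set.ncard_pos (Set.toFinite _)).mpr (ESet_nonempty c hinv hfix)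
  set M := (ELetterStar c (some s₀)).ncard with hMdef
  have hMN : M * 2 = N := two_mul_ncard_Es c hinv s₀
  have hM : ∀ s : S, (ELetterStar c (some s)).ncard = M := by
    intro s
    have h1 := two_mul_ncard_Es c hinv s
    omega
  have hMpos : 0 < M := by omega
  have hvcard : ∀ v : Fin d → Option S,
      (RealizeStar c v).ncard = M ^ ksupp v * N ^ (d - ksupp v) :=
    fun v => ncard_realize_eq c v hM hN.symm
  -- the realization is a disjoint union covering the box
  have hUnion : RealizeSetStar c V
      = RealizeStar c a ∪ (RealizeStar c b ∪ RealizeStar c e) := by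
    rw [hVeq]
    simp [RealizeSetStar, Set.biUnion_insert, Set.union_assoc]
  have hd2 : Disjoint (RealizeStar c b) (RealizeStar c e) := realize_disjoint c hDbe
  have hd1 : Disjoint (RealizeStar c a) (RealizeStar c b ∪ RealizeStar c e) :=
    Set.disjoint_union_right.mpr ⟨realize_disjoint c hDab, realize_disjoint c hDae⟩
  have hsum : (RealizeStar c a).ncard +
      ((RealizeStar c b).ncard + (RealizeStar c e).ncard) = N ^ d := by
    rw [← Set.ncard_union_eq hd2 (Set.toFinite _) (Set.toFinite _),
      ← Set.ncard_union_eq hd1 (Set.toFinite _) (Set.toFinite _),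
      ← hUnion, hcover]
    exact ncard_box c hN.symm
  -- convert to the power-of-two equation
  have hterm : ∀ v : Fin d → Option S,
      M ^ ksupp v * N ^ (d - ksupp v) = M ^ d * 2 ^ (d - ksupp v) := by
    intro v
    have hk := ksupp_le (d := d) v
    rw [← hMN, mul_pow, ← mul_assoc, ← pow_add, Nat.add_sub_cancel' hk]
  have hNd : N ^ d = M ^ d * 2 ^ d := by rw [← hMN, mul_pow]
  have key : 2 ^ (d - ksupp a) + 2 ^ (d - ksupp b) + 2 ^ (d - ksupp e) = 2 ^ d := by
    have h1 := hvcard a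
    have h2 := hvcard b
    have h3 := hvcard e
    rw [hterm a] at h1
    rw [hterm b] at h2
    rw [hterm e] at h3
    have : M ^ d * (2 ^ (d - ksupp a) + 2 ^ (d - ksupp b) + 2 ^ (d - ksupp e))
        = M ^ d * 2 ^ d := by
      rw [Nat.mul_add, Nat.mul_add, ← h1, ← h2, ← h3, ← hNd]
      omega
    exact Nat.eq_of_mul_eq_mul_left (Nat.pow_pos hMpos) this
  obtain ⟨-, hcases⟩ := pow_sum_three key
  have hka1 := ksupp_pos hDab
  have hkb1 := ksupp_pos hDba
  have hke1 := ksupp_pos hDea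
  have hkad := ksupp_le (d := d) a
  have hkbd := ksupp_le (d := d) b
  have hked := ksupp_le (d := d) e
  rcases hcases with ⟨h1, h2, h3⟩ | ⟨h1, h2, h3⟩ | ⟨h1, h2, h3⟩
  · -- ksupp a = 1, ksupp b = 2, ksupp e = 2
    obtain ⟨i₁, i₂, hne, l₁, l₂, p1, p2, p3, p4, p5, p6, p7⟩ :=
      final_structure c hinv hfix a b e hDab hDae hDbe
        (by omega) (by omega) (by omega)
    exact ⟨i₁, i₂, hne, l₁, l₂, a, b, e, hVeq, p1, p2, p3, p4, p5, p6, p7⟩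
  · -- ksupp b = 1, ksupp a = 2, ksupp e = 2
    obtain ⟨i₁, i₂, hne, l₁, l₂, p1, p2, p3, p4, p5, p6, p7⟩ :=
      final_structure c hinv hfix b a e hDba hDbe hDae
        (by omega) (by omega) (by omega)
    refine ⟨i₁, i₂, hne, l₁, l₂, b, a, e, ?_, p1, p2, p3, p4, p5, p6, p7⟩
    rw [hVeq, Set.insert_comm]
  · -- ksupp e = 1, ksupp a = 2, ksupp b = 2
    obtain ⟨i₁, i₂, hne, l₁, l₂, p1, p2, p3, p4, p5, p6, p7⟩ :=
      final_structure c hinv hfix e a b hDea hDeb hDab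
        (by omega) (by omega) (by omega)
    refine ⟨i₁, i₂, hne, l₁, l₂, e, a, b, ?_, p1, p2, p3, p4, p5, p6, p7⟩
    rw [hVeq]
    ext x
    simp only [Set.mem_insert_iff, Set.mem_singleton_iff]
    tauto
end

section
/- Let S be a finite alphabet with a complementation, let d ≥ 2, and let V, W ⊆ (*S)^d be disjoint equivalent polybox codes without twin pairs with |V| = |W| = 2. Then there exist distinct indices i_1, i_2 ∈ {1,…,d}, letters l_1, l_2 ∈ S, and a word p ∈ (*S)^d such that every word of V ∪ W agrees with p at every coordinate outside {i_1, i_2}, and at the coordinates (i_1, i_2) the two words of V carry the pairs (*, l_2) and (l_1, (l_2)'), while the two words of W carry the pairs ((l_1)', l_2) and (l_1, *). -/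
set_option linter.unusedSectionVars false
set_option linter.unusedVariables false
set_option maxHeartbeats 800000


variable {S : Type}

namespace TT

def leL (a b : Option S) : Prop := b = none ∨ b = a

def cpl (B : Set S) (a : Option S) : Prop := ∀ s, a = some s → s ∈ B

lemma leL_antisymm {a b : Option S} (h1 : leL a b) (h2 : leL b a) : a = b := by
  rcases h1 with h1 | h1 <;> rcases h2 with h2 | h2 <;> simp_all

lemma cpl_mono {B : Set S} {a b : Option S} (h : leL a b) (ha : cpl B a) : cpl B b := by
  rcases h with h | h <;> subst h
  · intro s hs; cases hs
  · exact ha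

lemma leL_of_some {a b : Option S} {s : S} (h : leL a b) (hb : b = some s) : a = some s := by
  rcases h with h | h
  · rw [hb] at h; cases h
  · rw [← h]; exact hb

variable {c : S → S} (hinv : Function.Involutive c) (hfix : ∀ s, c s ≠ s)

include hinv hfix

omit hinv hfix in
lemma cpl_none (B : Set S) : cpl B (none : Option S) := fun _ h => by cases h

omit hinv hfix in
lemma not_mem_comp {B : Set S} (hB : B ∈ ESet c) {t : S} (h : c t ∈ B) : t ∉ B := by
  intro ht
  rcases hB t with ⟨_, h2⟩ | ⟨_, h2⟩
  exacts [h2 h, h2 ht]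

lemma exists_base [Fintype S] : ∃ R, R ∈ ESet c := by
  classical
  obtain ⟨f, hf⟩ : ∃ f : S → ℕ, Function.Injective f :=
    ⟨fun s => ((Fintype.equivFin S) s : ℕ),
      fun a b h => (Fintype.equivFin S).injective (Fin.val_injective h)⟩
  refine ⟨{s | f s < f (c s)}, fun s => ?_⟩
  have h1 : f s ≠ f (c s) := fun h => hfix s (hf h).symm
  have h2 : c (c s) = s := hinv s
  simp only [Set.mem_setOf_eq, h2]
  rcases lt_or_gt_of_ne h1 with h | h
  · exact Or.inl ⟨h, not_lt.2 (le_of_lt h)⟩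
  · exact Or.inr ⟨h, not_lt.2 (le_of_lt h)⟩

lemma exists_extend [Fintype S] (P : Set S) (hP : ∀ s ∈ P, c s ∉ P) :
    ∃ B ∈ ESet c, P ⊆ B := by
  obtain ⟨R, hR⟩ := exists_base hinv hfix (S := S)
  refine ⟨{s | s ∈ P ∨ (s ∈ R ∧ s ∉ P ∧ c s ∉ P)}, fun s => ?_, fun s hs => Or.inl hs⟩
  simp only [Set.mem_setOf_eq]
  have hcc : c (c s) = s := hinv s
  by_cases h1 : s ∈ P
  · left
    refine ⟨Or.inl h1, ?_⟩
    rintro (h | ⟨_, _, h⟩)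
    · exact hP s h1 h
    · rw [hcc] at h; exact h h1
  · by_cases h2 : c s ∈ P
    · right
      refine ⟨Or.inl h2, ?_⟩
      rintro (h | ⟨_, _, h⟩)
      · exact h1 h
      · exact h h2
    · rcases hR s with ⟨ha, hb⟩ | ⟨ha, hb⟩
      · left
        refine ⟨Or.inr ⟨ha, h1, h2⟩, ?_⟩
        rintro (h | ⟨h, _, _⟩)
        · exact h2 h
        · exact hb h
      · right
        refine ⟨Or.inr ⟨ha, h2, by rw [hcc]; exact h1⟩, ?_⟩
        rintro (h | ⟨h, _, _⟩)
        · exact h1 h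
        · exact hb h

lemma exB1 [Fintype S] (s : S) : ∃ B ∈ ESet c, s ∈ B := by
  obtain ⟨B, hB, hP⟩ := exists_extend hinv hfix {s}
    (by
      intro t ht
      rw [Set.mem_singleton_iff] at ht
      subst ht
      simpa using hfix t)
  exact ⟨B, hB, hP rfl⟩

lemma exB2 [Fintype S] (s t : S) (h : c s ≠ t) : ∃ B ∈ ESet c, s ∈ B ∧ t ∈ B := by
  obtain ⟨B, hB, hP⟩ := exists_extend hinv hfix {s, t}
    (by
      intro u hu
      rcases hu with hu | hu <;> subst hu <;>
        simp only [Set.mem_insert_iff, Set.mem_singleton_iff, not_or]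
      · exact ⟨fun hh => hfix u hh, h⟩
      · constructor
        · intro hh
          exact h (by rw [← hh, hinv u])
        · exact fun hh => hfix u hh)
  exact ⟨B, hB, hP (Or.inl rfl), hP (Or.inr rfl)⟩


variable {d : ℕ}

omit hinv hfix in
lemma EL_sub {a : Option S} {B : Set S} (h : B ∈ ELetterStar c a) : B ∈ ESet c := by
  cases a
  · exact h
  · exact h.1

omit hinv hfix in
lemma mem_EL {a : Option S} {B : Set S} (hB : B ∈ ESet c) :
    B ∈ ELetterStar c a ↔ cpl B a := by
  cases a with
  | none =>
    constructor
    · intro _ s hs; cases hs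
    · intro _; exact hB
  | some s =>
    constructor
    · intro h t ht
      cases ht
      exact h.2
    · intro h; exact ⟨hB, h s rfl⟩

lemma exCpl [Fintype S] (a : Option S) : ∃ B ∈ ESet c, cpl B a := by
  cases a with
  | none =>
    obtain ⟨R, hR⟩ := exists_base hinv hfix (S := S)
    exact ⟨R, hR, cpl_none R⟩
  | some s =>
    obtain ⟨B, hB, hs⟩ := exB1 hinv hfix s
    exact ⟨B, hB, fun t ht => by cases ht; exact hs⟩

lemma exSep [Fintype S] {a b : Option S} (h : ¬ leL a b) :
    ∃ B ∈ ESet c, cpl B a ∧ ¬ cpl B b := by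
  rw [leL, not_or] at h
  obtain ⟨hb, hba⟩ := h
  obtain ⟨t, rfl⟩ : ∃ t, b = some t := Option.ne_none_iff_exists'.mp hb
  cases a with
  | none =>
    obtain ⟨B, hB, hct⟩ := exB1 hinv hfix (c t)
    refine ⟨B, hB, cpl_none B, fun hc => ?_⟩
    exact not_mem_comp hB hct (hc t rfl)
  | some s =>
    have hst : s ≠ t := fun h => hba (by rw [h])
    obtain ⟨B, hB, hs, hct⟩ := exB2 hinv hfix s (c t)
      (fun h => hst (hinv.injective h))
    refine ⟨B, hB, fun r hr => by cases hr; exact hs, fun hc => ?_⟩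
    exact not_mem_comp hB hct (hc t rfl)

omit hinv hfix in
lemma realize_ESet {u : Fin d → Option S} {x : Fin d → Set S}
    (hx : x ∈ RealizeStar c u) (i : Fin d) : x i ∈ ESet c := EL_sub (hx i)

omit hinv hfix in
lemma realize_cpl {u : Fin d → Option S} {x : Fin d → Set S}
    (hx : x ∈ RealizeStar c u) (i : Fin d) : cpl (x i) (u i) :=
  (mem_EL (realize_ESet hx i)).1 (hx i)

lemma realize_nonempty [Fintype S] (u : Fin d → Option S) :
    ∃ x, x ∈ RealizeStar c u := by
  choose B hB hcpl using fun i => exCpl hinv hfix (u i)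
  exact ⟨B, fun i => (mem_EL (hB i)).2 (hcpl i)⟩

omit hinv hfix in
lemma le_realize_sub {u w : Fin d → Option S} (h : ∀ j, leL (u j) (w j)) :
    RealizeStar c u ⊆ RealizeStar c w := fun x hx i =>
  (mem_EL (realize_ESet hx i)).2 (cpl_mono (h i) (realize_cpl hx i))

lemma realize_sub_le [Fintype S] {u w : Fin d → Option S}
    (h : RealizeStar c u ⊆ RealizeStar c w) (j : Fin d) : leL (u j) (w j) := by
  by_contra hle
  obtain ⟨B, hB, hcA, hcB⟩ := exSep hinv hfix hle
  choose C hC hcC using fun i => exCpl hinv hfix (u i)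
  classical
  set x : Fin d → Set S := fun i => if i = j then B else C i with hxdef
  have hxE : ∀ i, x i ∈ ESet c := fun i => by
    by_cases hij : i = j <;> simp [hxdef, hij, hB, hC]
  have hxu : x ∈ RealizeStar c u := by
    intro i
    refine (mem_EL (hxE i)).2 ?_
    by_cases hij : i = j
    · subst hij; simpa [hxdef] using hcA
    · simpa [hxdef, hij] using hcC i
  have hj := realize_cpl (h hxu) j
  simp only [hxdef, if_pos rfl] at hj
  exact hcB hj

omit hinv hfix in
lemma dicho_disjoint {u v : Fin d → Option S} (h : DichoStar c u v)
    {x : Fin d → Set S} (hu : x ∈ RealizeStar c u) (hv : x ∈ RealizeStar c v) :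
    False := by
  obtain ⟨j, s, h1, h2⟩ := h
  have hs : s ∈ x j := realize_cpl hu j s h1
  have hcs : c s ∈ x j := realize_cpl hv j (c s) h2
  exact not_mem_comp (realize_ESet hu j) hcs hs

lemma realize_eq_word [Fintype S] {u w : Fin d → Option S}
    (h1 : RealizeStar c u ⊆ RealizeStar c w)
    (h2 : RealizeStar c w ⊆ RealizeStar c u) : u = w :=
  funext fun j => leL_antisymm (realize_sub_le hinv hfix h1 j) (realize_sub_le hinv hfix h2 j)

lemma dicho_symm {u v : Fin d → Option S} (h : DichoStar c u v) : DichoStar c v u := by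
  obtain ⟨j, s, h1, h2⟩ := h
  exact ⟨j, c s, h2, by rw [hinv s]; exact h1⟩

lemma cover [Fintype S] {u w₁ w₂ : Fin d → Option S}
    (h : RealizeStar c u ⊆ RealizeStar c w₁ ∪ RealizeStar c w₂)
    (h1 : ¬ ∀ j, leL (u j) (w₁ j)) (h2 : ¬ ∀ j, leL (u j) (w₂ j)) :
    ∃ i, ∀ j, j ≠ i → leL (u j) (w₁ j) ∧ leL (u j) (w₂ j) := by
  push_neg at h1 h2
  obtain ⟨i₁, hi₁⟩ := h1
  obtain ⟨i₂, hi₂⟩ := h2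
  have key : ∀ a b, ¬ leL (u a) (w₁ a) → ¬ leL (u b) (w₂ b) → a = b := by
    intro a b ha hb
    by_contra hab
    obtain ⟨A, hA, hAa, hAb⟩ := exSep hinv hfix ha
    obtain ⟨B, hB, hBa, hBb⟩ := exSep hinv hfix hb
    choose C hC hcC using fun i => exCpl hinv hfix (u i)
    classical
    set x : Fin d → Set S := fun i => if i = a then A else if i = b then B else C i
      with hxdef
    have hxE : ∀ i, x i ∈ ESet c := fun i => by
      by_cases h' : i = a
      · simp [hxdef, h', hA]
      · by_cases h'' : i = b
        · have hba : ¬ b = a := fun hh => h' (h''.trans hh)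
          simp [hxdef, h', h'', hba, hB]
        · simp [hxdef, h', h'', hC]
    have hxu : x ∈ RealizeStar c u := by
      intro i
      refine (mem_EL (hxE i)).2 ?_
      by_cases h' : i = a
      · subst h'; simpa [hxdef] using hAa
      · by_cases h'' : i = b
        · subst h''; simpa [hxdef, h'] using hBa
        · simpa [hxdef, h', h''] using hcC i
    rcases h hxu with hw | hw
    · have := realize_cpl hw a
      simp only [hxdef, if_pos rfl] at this
      exact hAb this
    · have := realize_cpl hw b
      simp only [hxdef, if_neg (Ne.symm hab), if_pos rfl] at this
      exact hBb this
  refine ⟨i₁, fun j hj => ⟨?_, ?_⟩⟩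
  · by_contra hc
    exact hj ((key j i₂ hc hi₂).trans (key i₁ i₂ hi₁ hi₂).symm)
  · by_contra hc
    exact hj (key i₁ j hi₁ hc).symm

lemma same_target [Fintype S] {v₁ v₂ w w' : Fin d → Option S}
    (hwd : DichoStar c w w')
    (hun : RealizeStar c v₁ ∪ RealizeStar c v₂ = RealizeStar c w ∪ RealizeStar c w')
    (h1 : ∀ j, leL (v₁ j) (w j)) (h2 : ∀ j, leL (v₂ j) (w j)) : False := by
  obtain ⟨x, hx⟩ := realize_nonempty hinv hfix w'
  have hx' : x ∈ RealizeStar c v₁ ∪ RealizeStar c v₂ := by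
    rw [hun]; exact Or.inr hx
  rcases hx' with h | h
  · exact dicho_disjoint hwd (le_realize_sub h1 h) hx
  · exact dicho_disjoint hwd (le_realize_sub h2 h) hx

lemma cross_target [Fintype S] {v₁ v₂ w w' : Fin d → Option S}
    (hwd : DichoStar c w w')
    (hun : RealizeStar c v₁ ∪ RealizeStar c v₂ = RealizeStar c w ∪ RealizeStar c w')
    (h1 : ∀ j, leL (v₁ j) (w j)) (h2 : ∀ j, leL (v₂ j) (w' j)) (hne : v₁ ≠ w) :
    False := by
  have hsub : RealizeStar c w ⊆ RealizeStar c v₁ := by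
    intro x hx
    have hx' : x ∈ RealizeStar c v₁ ∪ RealizeStar c v₂ := by
      rw [hun]; exact Or.inl hx
    rcases hx' with h | h
    · exact h
    · exact absurd hx (fun _ => dicho_disjoint hwd hx (le_realize_sub h2 h))
  exact hne (realize_eq_word hinv hfix (le_realize_sub h1) hsub)

lemma caseII [Fintype S] {v₁ v₂ w₁ w₂ : Fin d → Option S}
    (hvd : DichoStar c v₁ v₂) (hwd : DichoStar c w₁ w₂)
    (hun : RealizeStar c v₁ ∪ RealizeStar c v₂ = RealizeStar c w₁ ∪ RealizeStar c w₂)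
    (hne1 : v₁ ≠ w₁) (hne2 : v₂ ≠ w₂)
    (h22 : ∀ j, leL (v₂ j) (w₂ j))
    (h1 : ¬ ∀ j, leL (v₁ j) (w₁ j)) (h2 : ¬ ∀ j, leL (v₁ j) (w₂ j)) :
    ∃ i₁ i₂, i₁ ≠ i₂ ∧ ∃ s t : S,
      v₁ i₁ = none ∧ v₁ i₂ = some s ∧ v₂ i₁ = some (c t) ∧ v₂ i₂ = some (c s) ∧
      w₁ i₁ = some t ∧ w₁ i₂ = some s ∧ w₂ i₁ = some (c t) ∧ w₂ i₂ = none ∧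
      ∀ j, j ≠ i₁ → j ≠ i₂ → v₂ j = v₁ j ∧ w₁ j = v₁ j ∧ w₂ j = v₁ j := by
  classical
  have hsub22 : RealizeStar c v₂ ⊆ RealizeStar c w₂ := le_realize_sub h22
  have hw1v1 : RealizeStar c w₁ ⊆ RealizeStar c v₁ := by
    intro x hx
    have hx' : x ∈ RealizeStar c v₁ ∪ RealizeStar c v₂ := by
      rw [hun]; exact Or.inl hx
    rcases hx' with h | h
    · exact h
    · exact absurd hx (fun _ => dicho_disjoint hwd hx (hsub22 h))
  have hle_w1v1 : ∀ j, leL (w₁ j) (v₁ j) := realize_sub_le hinv hfix hw1v1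
  have hcov1 : RealizeStar c v₁ ⊆ RealizeStar c w₁ ∪ RealizeStar c w₂ := by
    intro x hx; rw [← hun]; exact Or.inl hx
  obtain ⟨i₁, hoff⟩ := cover hinv hfix hcov1 h1 h2
  have eq1 : ∀ j, j ≠ i₁ → w₁ j = v₁ j := fun j hj =>
    leL_antisymm (hle_w1v1 j) ((hoff j hj).1)
  obtain ⟨m, t, hm1, hm2⟩ := hwd
  have hmi : m = i₁ := by
    by_contra hmi
    have h3 := (hoff m hmi).2
    have h4 : v₁ m = some t := by rw [← eq1 m hmi]; exact hm1
    rw [hm2, h4] at h3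
    rcases h3 with h | h
    · cases h
    · exact hfix t (Option.some.inj h)
  subst hmi
  have hv1i : v₁ m = none := by
    rcases hle_w1v1 m with h | h
    · exact h
    · exfalso
      apply hne1
      funext j
      by_cases hj : j = m
      · subst hj; exact h.symm ▸ rfl
      · exact (eq1 j hj).symm
  obtain ⟨k, s, hk1, hk2⟩ := hvd
  have hki : k ≠ m := fun h => by rw [h, hv1i] at hk1; cases hk1
  have hw2k : w₂ k = none := by
    have h3 := (hoff k hki).2
    have h4 := h22 k
    rcases h3 with h | h
    · exact h
    · rcases h4 with h' | h'
      · exact h'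
      · rw [hk1] at h; rw [hk2] at h'
        rw [h] at h'
        exact absurd (Option.some.inj h').symm (hfix s)
  have hv2i : v₂ m = some (c t) := by
    rcases h22 m with h | h
    · rw [hm2] at h; cases h
    · rw [← h]; exact hm2
  set u : Fin d → Option S := Function.update v₁ m (some (c t)) with hu
  have huk : ∀ i, i ≠ m → u i = v₁ i := fun i hi => Function.update_of_ne hi _ _
  have hum : u m = some (c t) := Function.update_self _ _ _
  have hcovw2 : RealizeStar c w₂ ⊆ RealizeStar c u ∪ RealizeStar c v₂ := by
    intro x hx
    have hx' : x ∈ RealizeStar c v₁ ∪ RealizeStar c v₂ := by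
      rw [hun]; exact Or.inr hx
    rcases hx' with h | h
    · left
      intro i
      by_cases hij : i = m
      · subst hij
        rw [hum]
        exact ⟨realize_ESet hx i, realize_cpl hx i (c t) hm2⟩
      · rw [huk i hij]; exact h i
    · right; exact h
  have hnc1 : ¬ ∀ j, leL (w₂ j) (u j) := by
    intro hall
    have h5 : ∀ j, leL (v₂ j) (u j) :=
      realize_sub_le hinv hfix (hsub22.trans (le_realize_sub hall))
    have h6 := h5 k
    rw [hk2, huk k hki, hk1] at h6
    rcases h6 with h | h
    · cases h
    · exact hfix s (Option.some.inj h).symm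
  have hnc2 : ¬ ∀ j, leL (w₂ j) (v₂ j) := by
    intro hall
    exact hne2 (realize_eq_word hinv hfix hsub22 (le_realize_sub hall))
  obtain ⟨m', hoff'⟩ := cover hinv hfix hcovw2 hnc1 hnc2
  have hm'k : m' = k := by
    by_contra h
    have h3 := (hoff' k (fun hh => h hh.symm)).2
    rw [hw2k, hk2] at h3
    rcases h3 with h' | h' <;> cases h'
  rw [hm'k] at hoff'
  have hfin : ∀ j, j ≠ m → j ≠ k → v₂ j = v₁ j ∧ w₁ j = v₁ j ∧ w₂ j = v₁ j := by
    intro j hj1 hjk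
    have e2 : v₂ j = w₂ j := leL_antisymm (h22 j) ((hoff' j (fun hh => hjk hh)).2)
    have e3 : leL (w₂ j) (v₁ j) := by
      have := (hoff' j (fun hh => hjk hh)).1
      rwa [huk j hj1] at this
    have e4 : v₁ j = w₂ j := leL_antisymm ((hoff j hj1).2) e3
    exact ⟨e2.trans e4.symm, eq1 j hj1, e4.symm⟩
  refine ⟨m, k, fun h => hki h.symm, s, t, hv1i, hk1, hv2i, hk2, hm1,
    (eq1 k hki).trans hk1, hm2, hw2k, hfin⟩

lemma caseIII [Fintype S] {v₁ v₂ w₁ w₂ : Fin d → Option S}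
    (hvd : DichoStar c v₁ v₂) (hwd : DichoStar c w₁ w₂)
    (hvt : ¬ TwinPairStar c v₁ v₂)
    (hun : RealizeStar c v₁ ∪ RealizeStar c v₂ = RealizeStar c w₁ ∪ RealizeStar c w₂)
    (n11 : ¬ ∀ j, leL (v₁ j) (w₁ j)) (n12 : ¬ ∀ j, leL (v₁ j) (w₂ j))
    (n21 : ¬ ∀ j, leL (v₂ j) (w₁ j)) (n22 : ¬ ∀ j, leL (v₂ j) (w₂ j))
    (m11 : ¬ ∀ j, leL (w₁ j) (v₁ j)) (m12 : ¬ ∀ j, leL (w₁ j) (v₂ j))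
    (m21 : ¬ ∀ j, leL (w₂ j) (v₁ j)) (m22 : ¬ ∀ j, leL (w₂ j) (v₂ j)) : False := by
  have hc1 : RealizeStar c v₁ ⊆ RealizeStar c w₁ ∪ RealizeStar c w₂ := by
    intro x hx; rw [← hun]; exact Or.inl hx
  have hc2 : RealizeStar c v₂ ⊆ RealizeStar c w₁ ∪ RealizeStar c w₂ := by
    intro x hx; rw [← hun]; exact Or.inr hx
  have hc3 : RealizeStar c w₁ ⊆ RealizeStar c v₁ ∪ RealizeStar c v₂ := by
    intro x hx; rw [hun]; exact Or.inl hx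
  have hc4 : RealizeStar c w₂ ⊆ RealizeStar c v₁ ∪ RealizeStar c v₂ := by
    intro x hx; rw [hun]; exact Or.inr hx
  obtain ⟨i₁, hI1⟩ := cover hinv hfix hc1 n11 n12
  obtain ⟨i₂, hI2⟩ := cover hinv hfix hc2 n21 n22
  obtain ⟨m₁, hM1⟩ := cover hinv hfix hc3 m11 m12
  obtain ⟨m₂, hM2⟩ := cover hinv hfix hc4 m21 m22
  obtain ⟨k, s, hk1, hk2⟩ := hvd
  obtain ⟨k', t, ht1, ht2⟩ := hwd
  have hm1k : m₁ = k := by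
    by_contra h
    have h3 := hM1 k (fun hh => h hh.symm)
    have e1 := leL_of_some h3.1 hk1
    have e2 := leL_of_some h3.2 hk2
    rw [e1] at e2
    exact hfix s (Option.some.inj e2).symm
  have hm2k : m₂ = k := by
    by_contra h
    have h3 := hM2 k (fun hh => h hh.symm)
    have e1 := leL_of_some h3.1 hk1
    have e2 := leL_of_some h3.2 hk2
    rw [e1] at e2
    exact hfix s (Option.some.inj e2).symm
  have hi1k : i₁ = k' := by
    by_contra h
    have h3 := hI1 k' (fun hh => h hh.symm)
    have e1 := leL_of_some h3.1 ht1
    have e2 := leL_of_some h3.2 ht2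
    rw [e1] at e2
    exact hfix t (Option.some.inj e2).symm
  have hi2k : i₂ = k' := by
    by_contra h
    have h3 := hI2 k' (fun hh => h hh.symm)
    have e1 := leL_of_some h3.1 ht1
    have e2 := leL_of_some h3.2 ht2
    rw [e1] at e2
    exact hfix t (Option.some.inj e2).symm
  rw [hm1k] at hM1
  rw [hm2k] at hM2
  rw [hi1k] at hI1
  rw [hi2k] at hI2
  by_cases hkk : k = k'
  · subst hkk
    apply hvt
    refine ⟨k, ⟨s, hk1, hk2⟩, fun i hi => ?_⟩
    have e1 : v₁ i = w₁ i := leL_antisymm ((hI1 i hi).1) ((hM1 i hi).1)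
    have e2 : v₂ i = w₁ i := leL_antisymm ((hI2 i hi).1) ((hM1 i hi).2)
    exact e2.trans e1.symm
  · apply hvt
    refine ⟨k, ⟨s, hk1, hk2⟩, fun i hi => ?_⟩
    by_cases hik' : i = k'
    · subst hik'
      have a1 : v₁ i = none := by
        have u1 := (hM1 i (Ne.symm hkk)).1
        have u2 := (hM2 i (Ne.symm hkk)).1
        rcases u1 with h | h
        · exact h
        · rcases u2 with h' | h'
          · exact h'
          · rw [ht1] at h; rw [ht2] at h'; rw [h] at h'
            exact absurd (Option.some.inj h').symm (hfix t)
      have a2 : v₂ i = none := by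
        have u1 := (hM1 i (Ne.symm hkk)).2
        have u2 := (hM2 i (Ne.symm hkk)).2
        rcases u1 with h | h
        · exact h
        · rcases u2 with h' | h'
          · exact h'
          · rw [ht1] at h; rw [ht2] at h'; rw [h] at h'
            exact absurd (Option.some.inj h').symm (hfix t)
      rw [a1, a2]
    · have e1 : v₁ i = w₁ i := leL_antisymm ((hI1 i hik').1) ((hM1 i hi).1)
      have e2 : v₂ i = w₁ i := leL_antisymm ((hI2 i hik').1) ((hM1 i hi).2)
      exact e2.trans e1.symm

def Concl {d : ℕ} (c : S → S) (V W : Set (Fin d → Option S)) : Prop :=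
  ∃ (i₁ i₂ : Fin d), i₁ ≠ i₂ ∧ ∃ (l₁ l₂ : S) (p : Fin d → Option S),
    ∃ v₁ v₂ w₁ w₂ : Fin d → Option S,
      V = {v₁, v₂} ∧ W = {w₁, w₂} ∧
      (∀ j, j ≠ i₁ → j ≠ i₂ →
        v₁ j = p j ∧ v₂ j = p j ∧ w₁ j = p j ∧ w₂ j = p j) ∧
      v₁ i₁ = none ∧ v₁ i₂ = some l₂ ∧
      v₂ i₁ = some l₁ ∧ v₂ i₂ = some (c l₂) ∧
      w₁ i₁ = some (c l₁) ∧ w₁ i₂ = some l₂ ∧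
      w₂ i₁ = some l₁ ∧ w₂ i₂ = none

lemma assembleA [Fintype S] {V W : Set (Fin d → Option S)} {a b x y : Fin d → Option S}
    (hV : V = {a, b}) (hW : W = {x, y})
    (hvd : DichoStar c a b) (hwd : DichoStar c x y)
    (hun : RealizeStar c a ∪ RealizeStar c b = RealizeStar c x ∪ RealizeStar c y)
    (hne1 : a ≠ x) (hne2 : b ≠ y)
    (h22 : ∀ j, leL (b j) (y j))
    (h1 : ¬ ∀ j, leL (a j) (x j)) (h2 : ¬ ∀ j, leL (a j) (y j)) :
    Concl c V W := by
  obtain ⟨i₁, i₂, hne, s, t, H1, H2, H3, H4, H5, H6, H7, H8, H9⟩ :=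
    caseII hinv hfix hvd hwd hun hne1 hne2 h22 h1 h2
  exact ⟨i₁, i₂, hne, c t, s, a, a, b, x, y, hV, hW,
    fun j hj1 hj2 => ⟨rfl, (H9 j hj1 hj2).1, (H9 j hj1 hj2).2.1, (H9 j hj1 hj2).2.2⟩,
    H1, H2, H3, H4, by rw [hinv t]; exact H5, H6, H7, H8⟩

lemma assembleB [Fintype S] {V W : Set (Fin d → Option S)} {a b x y : Fin d → Option S}
    (hV : V = {a, b}) (hW : W = {x, y})
    (hvd : DichoStar c a b) (hwd : DichoStar c x y)
    (hun : RealizeStar c a ∪ RealizeStar c b = RealizeStar c x ∪ RealizeStar c y)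
    (hne1 : x ≠ a) (hne2 : y ≠ b)
    (h22 : ∀ j, leL (y j) (b j))
    (h1 : ¬ ∀ j, leL (x j) (a j)) (h2 : ¬ ∀ j, leL (x j) (b j)) :
    Concl c V W := by
  obtain ⟨i₁, i₂, hne, s, t, H1, H2, H3, H4, H5, H6, H7, H8, H9⟩ :=
    caseII hinv hfix hwd hvd hun.symm hne1 hne2 h22 h1 h2
  exact ⟨i₂, i₁, Ne.symm hne, s, c t, x, b, a, y, x,
    hV.trans (Set.pair_comm a b), hW.trans (Set.pair_comm x y),
    fun j hj1 hj2 => ⟨(H9 j hj2 hj1).2.2, (H9 j hj2 hj1).2.1, (H9 j hj2 hj1).1, rfl⟩,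
    H8, H7, H6, by rw [hinv t]; exact H5, H4, H3, H2, H1⟩

end TT


theorem two_two_equivalent_codes {d : ℕ} [Fintype S] (c : S → S)
    (hinv : Function.Involutive c) (hfix : ∀ s, c s ≠ s) (hd : 2 ≤ d)
    (V W : Set (Fin d → Option S))
    (hV : PolyboxCodeStar c V) (hW : PolyboxCodeStar c W)
    (hdisj : Disjoint V W) (heq : EquivCodesStar c V W)
    (hVt : NoTwinPairStar c V) (hWt : NoTwinPairStar c W)
    (hVcard : V.ncard = 2) (hWcard : W.ncard = 2) :
    ∃ (i₁ i₂ : Fin d), i₁ ≠ i₂ ∧ ∃ (l₁ l₂ : S) (p : Fin d → Option S),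
      ∃ v₁ v₂ w₁ w₂ : Fin d → Option S,
        V = {v₁, v₂} ∧ W = {w₁, w₂} ∧
        (∀ j, j ≠ i₁ → j ≠ i₂ →
          v₁ j = p j ∧ v₂ j = p j ∧ w₁ j = p j ∧ w₂ j = p j) ∧
        v₁ i₁ = none ∧ v₁ i₂ = some l₂ ∧
        v₂ i₁ = some l₁ ∧ v₂ i₂ = some (c l₂) ∧
        w₁ i₁ = some (c l₁) ∧ w₁ i₂ = some l₂ ∧
        w₂ i₁ = some l₁ ∧ w₂ i₂ = none := by
  classical
  obtain ⟨a, b, hab, rfl⟩ := Set.ncard_eq_two.mp hVcard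
  obtain ⟨x, y, hxy, rfl⟩ := Set.ncard_eq_two.mp hWcard
  have haV : a ∈ ({a, b} : Set (Fin d → Option S)) := by simp
  have hbV : b ∈ ({a, b} : Set (Fin d → Option S)) := by simp
  have hxW : x ∈ ({x, y} : Set (Fin d → Option S)) := by simp
  have hyW : y ∈ ({x, y} : Set (Fin d → Option S)) := by simp
  have nax : a ≠ x := fun h => Set.disjoint_left.mp hdisj haV (by rw [h]; exact hxW)
  have nay : a ≠ y := fun h => Set.disjoint_left.mp hdisj haV (by rw [h]; exact hyW)
  have nbx : b ≠ x := fun h => Set.disjoint_left.mp hdisj hbV (by rw [h]; exact hxW)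
  have nby : b ≠ y := fun h => Set.disjoint_left.mp hdisj hbV (by rw [h]; exact hyW)
  have hvd : DichoStar c a b := hV a haV b hbV hab
  have hwd : DichoStar c x y := hW x hxW y hyW hxy
  have hvt : ¬ TwinPairStar c a b := hVt a haV b hbV
  have hun : RealizeStar c a ∪ RealizeStar c b = RealizeStar c x ∪ RealizeStar c y := by
    have h : RealizeSetStar c {a, b} = RealizeSetStar c {x, y} := heq
    simpa [RealizeSetStar, Set.biUnion_pair] using h
  suffices hC : TT.Concl c ({a, b} : Set (Fin d → Option S)) {x, y} by
    obtain ⟨i₁, i₂, h0, l₁, l₂, p, v₁, v₂, w₁, w₂, hrest⟩ := hC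
    exact ⟨i₁, i₂, h0, l₁, l₂, p, v₁, v₂, w₁, w₂, hrest⟩
  by_cases cby : ∀ j, TT.leL (b j) (y j)
  · by_cases cax : ∀ j, TT.leL (a j) (x j)
    · exact (TT.cross_target hinv hfix hwd hun cax cby nax).elim
    · by_cases cay : ∀ j, TT.leL (a j) (y j)
      · exact (TT.same_target hinv hfix (TT.dicho_symm hinv hfix hwd)
          (hun.trans (Set.union_comm _ _)) cay cby).elim
      · exact TT.assembleA hinv hfix rfl rfl hvd hwd hun nax nby cby cax cay
  · by_cases cbx : ∀ j, TT.leL (b j) (x j)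
    · by_cases cay : ∀ j, TT.leL (a j) (y j)
      · exact (TT.cross_target hinv hfix (TT.dicho_symm hinv hfix hwd)
          (hun.trans (Set.union_comm _ _)) cay cbx nay).elim
      · by_cases cax : ∀ j, TT.leL (a j) (x j)
        · exact (TT.same_target hinv hfix hwd hun cax cbx).elim
        · exact TT.assembleA hinv hfix rfl (Set.pair_comm x y) hvd
            (TT.dicho_symm hinv hfix hwd) (hun.trans (Set.union_comm _ _))
            nay nbx cbx cay cax
    · by_cases cay : ∀ j, TT.leL (a j) (y j)
      · exact TT.assembleA hinv hfix (Set.pair_comm a b) rfl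
          (TT.dicho_symm hinv hfix hvd) hwd ((Set.union_comm _ _).trans hun)
          nbx nay cay cbx cby
      · by_cases cax : ∀ j, TT.leL (a j) (x j)
        · exact TT.assembleA hinv hfix (Set.pair_comm a b) (Set.pair_comm x y)
            (TT.dicho_symm hinv hfix hvd) (TT.dicho_symm hinv hfix hwd)
            (((Set.union_comm _ _).trans hun).trans (Set.union_comm _ _))
            nby nax cax cby cbx
        · by_cases cyb : ∀ j, TT.leL (y j) (b j)
          · by_cases cxa : ∀ j, TT.leL (x j) (a j)
            · exact (TT.cross_target hinv hfix hvd hun.symm cxa cyb (Ne.symm nax)).elim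
            · by_cases cxb : ∀ j, TT.leL (x j) (b j)
              · exact (TT.same_target hinv hfix (TT.dicho_symm hinv hfix hvd)
                  (hun.symm.trans (Set.union_comm _ _)) cxb cyb).elim
              · exact TT.assembleB hinv hfix rfl rfl hvd hwd hun
                  (Ne.symm nax) (Ne.symm nby) cyb cxa cxb
          · by_cases cya : ∀ j, TT.leL (y j) (a j)
            · by_cases cxb : ∀ j, TT.leL (x j) (b j)
              · exact (TT.cross_target hinv hfix (TT.dicho_symm hinv hfix hvd)
                  (hun.symm.trans (Set.union_comm _ _)) cxb cya (Ne.symm nbx)).elim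
              · by_cases cxa : ∀ j, TT.leL (x j) (a j)
                · exact (TT.same_target hinv hfix hvd hun.symm cxa cya).elim
                · exact TT.assembleB hinv hfix (Set.pair_comm a b) rfl
                    (TT.dicho_symm hinv hfix hvd) hwd ((Set.union_comm _ _).trans hun)
                    (Ne.symm nbx) (Ne.symm nay) cya cxb cxa
            · by_cases cxb : ∀ j, TT.leL (x j) (b j)
              · exact TT.assembleB hinv hfix rfl (Set.pair_comm x y) hvd
                  (TT.dicho_symm hinv hfix hwd) (hun.trans (Set.union_comm _ _))
                  (Ne.symm nay) (Ne.symm nbx) cxb cya cyb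
              · by_cases cxa : ∀ j, TT.leL (x j) (a j)
                · exact TT.assembleB hinv hfix (Set.pair_comm a b) (Set.pair_comm x y)
                    (TT.dicho_symm hinv hfix hvd) (TT.dicho_symm hinv hfix hwd)
                    (((Set.union_comm _ _).trans hun).trans (Set.union_comm _ _))
                    (Ne.symm nby) (Ne.symm nax) cxa cyb cya
                · exact (TT.caseIII hinv hfix hvd hwd hvt hun
                    cax cay cbx cby cxa cxb cya cyb).elim
end
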